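/- arXiv:cs/0502004 — 5 statements merged into one kernel-verified Lean document; each statement's English description precedes it below -/
import Mathlib

section
/- Let X, X₁, X₂, … be i.i.d. real random variables with mean 0, and let k ∈ ℕ be such that E[|X|^k] < ∞. Then E[(∑_{i=1}^n X_i)^k] = O(n^{⌊k/2⌋}); that is, there exists a constant C such that for all n ≥ 1, |E[(∑_{i=1}^n X_i)^k]| ≤ C·n^{⌊k/2⌋}. -/
open MeasureTheory ProbabilityTheory Finset

/-- Integral of a product of independent integrable random variables equals the
product of the integrals (together with integrability of the product). -/
private lemma indep_integral_prod_aux {Ω : Type*} [MeasurableSpace Ω] {μ : Measure Ω}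
    [IsProbabilityMeasure μ] (Y : ℕ → Ω → ℝ)
    (hindep : iIndepFun Y μ)
    (hmeas : ∀ i, Measurable (Y i)) :
    ∀ (T : Finset ℕ), (∀ i ∈ T, Integrable (Y i) μ) →
      Integrable (fun ω => ∏ i ∈ T, Y i ω) μ ∧
      ∫ ω, ∏ i ∈ T, Y i ω ∂μ = ∏ i ∈ T, ∫ ω, Y i ω ∂μ := by
  intro T
  induction T using Finset.cons_induction with
  | empty => intro _; simp
  | cons i s hi ih =>
    intro hint
    obtain ⟨hsint, hsval⟩ := ih fun j hj => hint j (Finset.mem_cons_of_mem hj)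
    have hIndep : IndepFun (∏ j ∈ s, Y j) (Y i) μ :=
      hindep.indepFun_finsetProd_of_notMem hmeas hi
    have hPint : Integrable (∏ j ∈ s, Y j) μ := by
      have : (∏ j ∈ s, Y j) = fun ω => ∏ j ∈ s, Y j ω := by
        funext ω; simp
      rw [this]; exact hsint
    have hiint : Integrable (Y i) μ := hint i (Finset.mem_cons_self i s)
    have hmul : Integrable ((∏ j ∈ s, Y j) * Y i) μ := hIndep.integrable_mul hPint hiint
    have hmulval : ∫ ω, ((∏ j ∈ s, Y j) * Y i) ω ∂μ =
        (∫ ω, (∏ j ∈ s, Y j) ω ∂μ) * ∫ ω, Y i ω ∂μ :=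
      hIndep.integral_mul_eq_mul_integral hPint.aestronglyMeasurable hiint.aestronglyMeasurable
    constructor
    · have : (fun ω => ∏ j ∈ Finset.cons i s hi, Y j ω) = (∏ j ∈ s, Y j) * Y i := by
        funext ω
        simp [Finset.prod_insert hi, mul_comm]
      rw [this]; exact hmul
    · have h1 : (fun ω => ∏ j ∈ Finset.cons i s hi, Y j ω) =
          fun ω => ((∏ j ∈ s, Y j) * Y i) ω := by
        funext ω
        simp [Finset.prod_insert hi, mul_comm]
      calc ∫ ω, ∏ j ∈ Finset.cons i s hi, Y j ω ∂μ
          = ∫ ω, ((∏ j ∈ s, Y j) * Y i) ω ∂μ := by rw [h1]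
        _ = (∫ ω, (∏ j ∈ s, Y j) ω ∂μ) * ∫ ω, Y i ω ∂μ := hmulval
        _ = (∏ j ∈ s, ∫ ω, Y j ω ∂μ) * ∫ ω, Y i ω ∂μ := by
            rw [← hsval]; congr 1; apply integral_congr_ae; filter_upwards with ω; simp
        _ = ∏ j ∈ Finset.cons i s hi, ∫ ω, Y j ω ∂μ := by
            rw [Finset.prod_cons, mul_comm]

/-- Theorem `devsumasym`: if `X, X₁, X₂, …` are i.i.d. real random
variables with mean `0` whose first `k` moments exist, then
`E[(∑_{i=1}^n X_i)^k] = O(n^⌊k/2⌋)`. -/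
theorem sum_pow_moment_bigO
    {Ω : Type*} [MeasurableSpace Ω] (μ : Measure Ω) [IsProbabilityMeasure μ]
    (X : ℕ → Ω → ℝ)
    (hmeas : ∀ i, Measurable (X i))
    (hindep : iIndepFun X μ)
    (hident : ∀ i, IdentDistrib (X i) (X 0) μ μ)
    (hmean : ∫ ω, X 0 ω ∂μ = 0)
    (k : ℕ)
    (hmom : Integrable (fun ω => |X 0 ω| ^ k) μ) :
    ∃ C : ℝ, ∀ n : ℕ, 1 ≤ n →
      |∫ ω, (∑ i ∈ Finset.range n, X i ω) ^ k ∂μ| ≤ C * (n : ℝ) ^ (k / 2) := by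
  classical
  set r := k / 2 with hr
  set M : ℝ := 1 + ∫ ω, |X 0 ω| ^ k ∂μ with hM
  have hMone : 1 ≤ M := by
    have h0 : 0 ≤ ∫ ω, |X 0 ω| ^ k ∂μ := integral_nonneg fun ω => by positivity
    simp only [hM]; linarith
  have hM0 : 0 ≤ M := zero_le_one.trans hMone
  -- pointwise bound
  have hptwise : ∀ (m : ℕ), m ≤ k → ∀ x : ℝ, |x| ^ m ≤ 1 + |x| ^ k := by
    intro m hm x
    rcases le_total |x| 1 with h | h
    · have h1 : |x| ^ m ≤ 1 := pow_le_one₀ (abs_nonneg x) h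
      have h2 : (0:ℝ) ≤ |x| ^ k := by positivity
      linarith
    · have h1 : |x| ^ m ≤ |x| ^ k := pow_le_pow_right₀ h hm
      linarith
  -- integrability of powers
  have hintabs : ∀ i, Integrable (fun ω => |X i ω| ^ k) μ := by
    intro i
    have h := ((hident i).comp (measurable_abs.pow_const k)).integrable_iff.mpr
    exact h hmom
  have hintm : ∀ i, ∀ m, m ≤ k → Integrable (fun ω => X i ω ^ m) μ := by
    intro i m hm
    have hb : Integrable (fun ω => 1 + |X i ω| ^ k) μ := (integrable_const 1).add (hintabs i)
    refine hb.mono' (((hmeas i).pow_const m).aestronglyMeasurable) ?_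
    filter_upwards with ω
    rw [Real.norm_eq_abs, abs_pow]
    exact hptwise m hm _
  -- moments are the same for all i
  have hmomeq : ∀ i m, ∫ ω, X i ω ^ m ∂μ = ∫ ω, X 0 ω ^ m ∂μ := by
    intro i m
    exact ((hident i).comp (measurable_id.pow_const m)).integral_eq
  -- moment bound
  have hmombound : ∀ m, m ≤ k → |∫ ω, X 0 ω ^ m ∂μ| ≤ M := by
    intro m hm
    calc |∫ ω, X 0 ω ^ m ∂μ| ≤ ∫ ω, |X 0 ω ^ m| ∂μ := by
          simpa [Real.norm_eq_abs] using norm_integral_le_integral_norm (fun ω => X 0 ω ^ m)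
      _ ≤ ∫ ω, 1 + |X 0 ω| ^ k ∂μ := by
          refine integral_mono ((hintm 0 m hm).abs) ((integrable_const 1).add hmom) ?_
          intro ω
          show |X 0 ω ^ m| ≤ 1 + |X 0 ω| ^ k
          rw [abs_pow]
          exact hptwise m hm _
      _ = M := by
          rw [integral_add (integrable_const 1) hmom]
          simp [hM]
  have hmean1 : ∫ ω, X 0 ω ^ 1 ∂μ = 0 := by simpa using hmean
  refine ⟨M ^ k * (((r + 1) * r ^ k : ℕ) : ℝ), ?_⟩
  intro n hn
  -- notation
  set P : Finset (Fin k → ℕ) := Fintype.piFinset fun _ : Fin k => Finset.range n with hP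
  set m : (Fin k → ℕ) → ℕ → ℕ :=
    fun p i => (Finset.univ.filter fun j => p j = i).card with hm
  set T : (Fin k → ℕ) → Finset ℕ := fun p => Finset.image p Finset.univ with hT
  have hmk : ∀ p i, m p i ≤ k := by
    intro p i
    calc m p i ≤ (Finset.univ : Finset (Fin k)).card := Finset.card_filter_le _ _
      _ = k := by simp
  -- expansion of the k-th power
  have hexp : ∀ ω, (∑ i ∈ Finset.range n, X i ω) ^ k = ∑ p ∈ P, ∏ j, X (p j) ω := by
    intro ω
    exact Finset.sum_pow' (Finset.range n) (fun i => X i ω) k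
  -- rewrite each product using fibers
  have hprod : ∀ (p : Fin k → ℕ) (ω : Ω), ∏ j, X (p j) ω = ∏ i ∈ T p, X i ω ^ m p i := by
    intro p ω
    exact Finset.prod_comp (fun i => X i ω) p
  -- integrability and value of each term
  have hterm : ∀ p : Fin k → ℕ,
      Integrable (fun ω => ∏ j, X (p j) ω) μ ∧
      ∫ ω, ∏ j, X (p j) ω ∂μ = ∏ i ∈ T p, ∫ ω, X 0 ω ^ m p i ∂μ := by
    intro p
    have hY : iIndepFun (fun i ω => X i ω ^ m p i) μ :=
      hindep.comp (fun i x => x ^ m p i) (fun i => measurable_id.pow_const _)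
    have hYmeas : ∀ i, Measurable (fun ω => X i ω ^ m p i) :=
      fun i => (hmeas i).pow_const _
    obtain ⟨h1, h2⟩ := indep_integral_prod_aux (fun i ω => X i ω ^ m p i) hY hYmeas (T p)
      (fun i _ => hintm i (m p i) (hmk p i))
    constructor
    · have : (fun ω => ∏ j, X (p j) ω) = fun ω => ∏ i ∈ T p, X i ω ^ m p i := by
        funext ω; exact hprod p ω
      rw [this]; exact h1
    · calc ∫ ω, ∏ j, X (p j) ω ∂μ = ∫ ω, ∏ i ∈ T p, X i ω ^ m p i ∂μ := by
            apply integral_congr_ae; filter_upwards with ω; exact hprod p ω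
        _ = ∏ i ∈ T p, ∫ ω, X i ω ^ m p i ∂μ := h2
        _ = ∏ i ∈ T p, ∫ ω, X 0 ω ^ m p i ∂μ :=
            Finset.prod_congr rfl fun i _ => hmomeq i (m p i)
  -- the integral as a sum of moment products
  have hint_eq : ∫ ω, (∑ i ∈ Finset.range n, X i ω) ^ k ∂μ =
      ∑ p ∈ P, ∏ i ∈ T p, ∫ ω, X 0 ω ^ m p i ∂μ := by
    calc ∫ ω, (∑ i ∈ Finset.range n, X i ω) ^ k ∂μ
        = ∫ ω, ∑ p ∈ P, ∏ j, X (p j) ω ∂μ := by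
          apply integral_congr_ae; filter_upwards with ω; exact hexp ω
      _ = ∑ p ∈ P, ∫ ω, ∏ j, X (p j) ω ∂μ :=
          integral_finset_sum P fun p _ => (hterm p).1
      _ = ∑ p ∈ P, ∏ i ∈ T p, ∫ ω, X 0 ω ^ m p i ∂μ :=
          Finset.sum_congr rfl fun p _ => (hterm p).2
  -- restrict to "good" p : all fiber multiplicities at least 2
  set good : (Fin k → ℕ) → Prop := fun p => ∀ i ∈ T p, 2 ≤ m p i with hgood
  have hvanish : ∀ p ∈ P, (∏ i ∈ T p, ∫ ω, X 0 ω ^ m p i ∂μ) ≠ 0 → good p := by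
    intro p _ hne
    by_contra hbad
    simp only [hgood, not_forall] at hbad
    obtain ⟨i, hiT, hlt⟩ := hbad
    have h1le : 1 ≤ m p i := by
      obtain ⟨j, _, hji⟩ := Finset.mem_image.mp hiT
      have : j ∈ Finset.univ.filter fun j' => p j' = i := by
        simp [hji]
      exact Finset.card_pos.mpr ⟨j, this⟩
    have heq1 : m p i = 1 := by omega
    apply hne
    apply Finset.prod_eq_zero hiT
    rw [heq1, hmean1]
  have hsum_filter : ∑ p ∈ P, ∏ i ∈ T p, ∫ ω, X 0 ω ^ m p i ∂μ =
      ∑ p ∈ P.filter good, ∏ i ∈ T p, ∫ ω, X 0 ω ^ m p i ∂μ :=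
    (Finset.sum_filter_of_ne hvanish).symm
  -- bound each good term by M ^ k
  have hTk : ∀ p : Fin k → ℕ, (T p).card ≤ k := by
    intro p
    calc (T p).card ≤ (Finset.univ : Finset (Fin k)).card := Finset.card_image_le
      _ = k := by simp
  have htermbound : ∀ p : Fin k → ℕ, |∏ i ∈ T p, ∫ ω, X 0 ω ^ m p i ∂μ| ≤ M ^ k := by
    intro p
    calc |∏ i ∈ T p, ∫ ω, X 0 ω ^ m p i ∂μ| = ∏ i ∈ T p, |∫ ω, X 0 ω ^ m p i ∂μ| :=
          Finset.abs_prod _ _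
      _ ≤ ∏ i ∈ T p, M :=
          Finset.prod_le_prod (fun i _ => abs_nonneg _)
            (fun i _ => hmombound (m p i) (hmk p i))
      _ = M ^ (T p).card := by rw [Finset.prod_const]
      _ ≤ M ^ k := pow_le_pow_right₀ hMone (hTk p)
  -- good p have few distinct values
  have hgoodcard : ∀ p ∈ P.filter good, (T p).card ≤ r := by
    intro p hp
    have hgp : good p := (Finset.mem_filter.mp hp).2
    have hsum : (Finset.univ : Finset (Fin k)).card = ∑ i ∈ T p, m p i :=
      Finset.card_eq_sum_card_fiberwise fun j _ => Finset.mem_image_of_mem p (Finset.mem_univ j)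
    have hk : k = ∑ i ∈ T p, m p i := by simpa using hsum
    have h2 : 2 * (T p).card ≤ ∑ i ∈ T p, m p i := by
      calc 2 * (T p).card = ∑ _i ∈ T p, 2 := by rw [Finset.sum_const]; ring
        _ ≤ ∑ i ∈ T p, m p i := Finset.sum_le_sum fun i hi => hgp i hi
    rw [hr]
    omega
  -- counting bound
  have hcount : (P.filter good).card ≤ (r + 1) * r ^ k * n ^ r := by
    have hsub : P.filter good ⊆
        (((Finset.range n).powerset.filter fun S => S.card ≤ r).biUnion
          fun S => Fintype.piFinset fun _ : Fin k => S) := by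
      intro p hp
      have hpP : p ∈ P := (Finset.mem_filter.mp hp).1
      refine Finset.mem_biUnion.mpr ⟨T p, ?_, ?_⟩
      · refine Finset.mem_filter.mpr ⟨Finset.mem_powerset.mpr ?_, hgoodcard p hp⟩
        intro i hi
        obtain ⟨j, _, hji⟩ := Finset.mem_image.mp hi
        have := Fintype.mem_piFinset.mp hpP j
        rwa [hji] at this
      · exact Fintype.mem_piFinset.mpr fun j => Finset.mem_image_of_mem p (Finset.mem_univ j)
    have hS : ((Finset.range n).powerset.filter fun S => S.card ≤ r).card ≤ (r + 1) * n ^ r := by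
      have hsub2 : ((Finset.range n).powerset.filter fun S => S.card ≤ r) ⊆
          (Finset.range (r + 1)).biUnion fun s => Finset.powersetCard s (Finset.range n) := by
        intro S hS
        obtain ⟨h1, h2⟩ := Finset.mem_filter.mp hS
        refine Finset.mem_biUnion.mpr ⟨S.card, Finset.mem_range.mpr (by omega), ?_⟩
        exact Finset.mem_powersetCard.mpr ⟨Finset.mem_powerset.mp h1, rfl⟩
      calc ((Finset.range n).powerset.filter fun S => S.card ≤ r).card
          ≤ ((Finset.range (r + 1)).biUnion fun s =>
              Finset.powersetCard s (Finset.range n)).card := Finset.card_le_card hsub2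
        _ ≤ ∑ s ∈ Finset.range (r + 1), (Finset.powersetCard s (Finset.range n)).card :=
            Finset.card_biUnion_le
        _ ≤ ∑ s ∈ Finset.range (r + 1), n ^ r := by
            refine Finset.sum_le_sum fun s hs => ?_
            rw [Finset.card_powersetCard, Finset.card_range]
            calc n.choose s ≤ n ^ s := Nat.choose_le_pow n s
              _ ≤ n ^ r := Nat.pow_le_pow_right hn (by
                  have := Finset.mem_range.mp hs; omega)
        _ = (r + 1) * n ^ r := by rw [Finset.sum_const, Finset.card_range]; ring
    calc (P.filter good).card
        ≤ (((Finset.range n).powerset.filter fun S => S.card ≤ r).biUnion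
            fun S => Fintype.piFinset fun _ : Fin k => S).card := Finset.card_le_card hsub
      _ ≤ ∑ S ∈ (Finset.range n).powerset.filter fun S => S.card ≤ r,
            (Fintype.piFinset fun _ : Fin k => S).card := Finset.card_biUnion_le
      _ ≤ ∑ S ∈ (Finset.range n).powerset.filter fun S => S.card ≤ r, r ^ k := by
          refine Finset.sum_le_sum fun S hS => ?_
          have hSc : S.card ≤ r := (Finset.mem_filter.mp hS).2
          calc (Fintype.piFinset fun _ : Fin k => S).card = ∏ _j : Fin k, S.card := by
                rw [Fintype.card_piFinset]
            _ = S.card ^ k := by rw [Finset.prod_const]; simp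
            _ ≤ r ^ k := Nat.pow_le_pow_left hSc k
      _ = ((Finset.range n).powerset.filter fun S => S.card ≤ r).card * r ^ k := by
          rw [Finset.sum_const]; ring
      _ ≤ ((r + 1) * n ^ r) * r ^ k := Nat.mul_le_mul_right _ hS
      _ = (r + 1) * r ^ k * n ^ r := by ring
  -- put everything together
  rw [hint_eq, hsum_filter]
  calc |∑ p ∈ P.filter good, ∏ i ∈ T p, ∫ ω, X 0 ω ^ m p i ∂μ|
      ≤ ∑ p ∈ P.filter good, |∏ i ∈ T p, ∫ ω, X 0 ω ^ m p i ∂μ| :=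
        Finset.abs_sum_le_sum_abs _ _
    _ ≤ ∑ p ∈ P.filter good, M ^ k :=
        Finset.sum_le_sum fun p _ => htermbound p
    _ = ((P.filter good).card : ℝ) * M ^ k := by rw [Finset.sum_const]; simp [mul_comm]
    _ ≤ (((r + 1) * r ^ k * n ^ r : ℕ) : ℝ) * M ^ k := by
        refine mul_le_mul_of_nonneg_right ?_ (by positivity)
        exact_mod_cast hcount
    _ = M ^ k * (((r + 1) * r ^ k : ℕ) : ℝ) * (n : ℝ) ^ r := by push_cast; ring
    _ = M ^ k * (((r + 1) * r ^ k : ℕ) : ℝ) * (n : ℝ) ^ (k / 2) := by rw [hr]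
end

section
/- Let X, X₁, X₂, … be i.i.d. real random variables, let μ* = E[X], and define μ̂_n = (n₀·x₀ + ∑_{i=1}^n X_i)/(n + n₀) for fixed constants x₀ ∈ ℝ and n₀ > 0. If k ∈ ℕ and E[|X|^k] < ∞, then E[(μ̂_n − μ*)^k] = O(n^{−⌈k/2⌉}); that is, there exists a constant C such that for all n ≥ 1, |E[(μ̂_n − μ*)^k]| ≤ C·n^{−⌈k/2⌉}. -/
open MeasureTheory ProbabilityTheory Finset

/-- The modified maximum likelihood estimator
`μ̂_n = (n₀·x₀ + ∑_{i=1}^n X_i) / (n + n₀)`, built from a fake initial outcome `x₀`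
counted with multiplicity `n₀`. -/
noncomputable def modML {Ω : Type*} (x₀ n₀ : ℝ) (X : ℕ → Ω → ℝ) (n : ℕ) (ω : Ω) : ℝ :=
  (n₀ * x₀ + ∑ i ∈ Finset.range n, X i ω) / (n + n₀)

private lemma indepProdInt {Ω : Type*} [MeasurableSpace Ω] {μ : Measure Ω} [IsProbabilityMeasure μ]
    {f : ℕ → Ω → ℝ} (hind : iIndepFun f μ)
    (hmeas : ∀ i, Measurable (f i)) (hint : ∀ i, Integrable (f i) μ) (s : Finset ℕ) :
    Integrable (fun ω => ∏ i ∈ s, f i ω) μ ∧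
      ∫ ω, ∏ i ∈ s, f i ω ∂μ = ∏ i ∈ s, ∫ ω, f i ω ∂μ := by
  classical
  induction s using Finset.cons_induction with
  | empty => simp
  | cons a s ha ih =>
    have hip : IndepFun (f a) (∏ i ∈ s, f i) μ :=
      (hind.indepFun_finset_prod_of_notMem hmeas ha).symm
    have hPeq : (∏ i ∈ s, f i) = fun ω => ∏ i ∈ s, f i ω := by
      funext ω; exact Finset.prod_apply ω s f
    have hP : Integrable (∏ i ∈ s, f i) μ := by rw [hPeq]; exact ih.1
    have hmul : Integrable (f a * ∏ i ∈ s, f i) μ := hip.integrable_mul (hint a) hP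
    have hmuleq : (f a * ∏ i ∈ s, f i) = fun ω => ∏ i ∈ Finset.cons a s ha, f i ω := by
      funext ω; simp only [Pi.mul_apply, Finset.prod_cons, hPeq]
    constructor
    · rw [← hmuleq]; exact hmul
    · have := hip.integral_mul_eq_mul_integral (hint a).1 hP.1
      calc ∫ ω, ∏ i ∈ Finset.cons a s ha, f i ω ∂μ
          = ∫ ω, (f a * ∏ i ∈ s, f i) ω ∂μ := by rw [hmuleq]
        _ = (∫ ω, f a ω ∂μ) * ∫ ω, (∏ i ∈ s, f i) ω ∂μ := this
        _ = (∫ ω, f a ω ∂μ) * ∏ i ∈ s, ∫ ω, f i ω ∂μ := by rw [hPeq, ih.2]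
        _ = ∏ i ∈ Finset.cons a s ha, ∫ ω, f i ω ∂μ := by rw [Finset.prod_cons]

private lemma countLemma (j t n : ℕ) (hn : 1 ≤ n) :
    ((Fintype.piFinset fun _ : Fin j => Finset.range n).filter
      (fun g => (Finset.image g Finset.univ).card ≤ t)).card ≤ t ^ j * n ^ t := by
  classical
  have hsub : ((Fintype.piFinset fun _ : Fin j => Finset.range n).filter
      (fun g => (Finset.image g Finset.univ).card ≤ t)) ⊆
      ((Fintype.piFinset fun _ : Fin j => (Finset.univ : Finset (Fin t))) ×ˢ
        (Fintype.piFinset fun _ : Fin t => Finset.range n)).image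
        (fun p => fun q => p.2 (p.1 q)) := by
    intro g hg
    simp only [Finset.mem_filter, Fintype.mem_piFinset, Finset.mem_range] at hg
    obtain ⟨hg1, hg2⟩ := hg
    set A := Finset.image g Finset.univ with hA
    set l := A.toList with hl
    have hlen : l.length ≤ t := by rw [hl, Finset.length_toList]; exact hg2
    have hmem : ∀ p : Fin j, g p ∈ l := fun p => by
      rw [hl, Finset.mem_toList]; exact Finset.mem_image_of_mem g (Finset.mem_univ p)
    have hidx : ∀ p : Fin j, l.idxOf (g p) < t :=
      fun p => lt_of_lt_of_le (List.idxOf_lt_length_iff.mpr (hmem p)) hlen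
    refine Finset.mem_image.mpr
      ⟨(fun p => ⟨l.idxOf (g p), hidx p⟩, fun i => l.getD i 0), ?_, ?_⟩
    · rw [Finset.mem_product]
      constructor
      · simp [Fintype.mem_piFinset]
      · rw [Fintype.mem_piFinset]
        intro i
        show l.getD i 0 ∈ Finset.range n
        by_cases hi : (i : ℕ) < l.length
        · rw [List.getD_eq_getElem l 0 hi]
          have hmemA : l[(i:ℕ)] ∈ A := Finset.mem_toList.mp (List.getElem_mem _)
          obtain ⟨p, -, hp⟩ := Finset.mem_image.mp hmemA
          rw [← hp]; exact Finset.mem_range.mpr (hg1 p)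
        · rw [List.getD_eq_default l 0 (le_of_not_gt hi)]
          exact Finset.mem_range.mpr hn
    · funext q
      show l.getD (l.idxOf (g q)) 0 = g q
      have h1 : l.idxOf (g q) < l.length := List.idxOf_lt_length_iff.mpr (hmem q)
      rw [List.getD_eq_getElem l 0 h1]
      exact List.getElem_idxOf h1
  calc ((Fintype.piFinset fun _ : Fin j => Finset.range n).filter
      (fun g => (Finset.image g Finset.univ).card ≤ t)).card
      ≤ _ := Finset.card_le_card hsub
    _ ≤ ((Fintype.piFinset fun _ : Fin j => (Finset.univ : Finset (Fin t))) ×ˢ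
        (Fintype.piFinset fun _ : Fin t => Finset.range n)).card := Finset.card_image_le
    _ = t ^ j * n ^ t := by
        rw [Finset.card_product, Fintype.card_piFinset, Fintype.card_piFinset]
        simp

private lemma powHelper {r : ℝ} (hr : 0 ≤ r) {m K : ℕ} (hm : m ≤ K) :
    r ^ m ≤ 1 + r ^ K := by
  rcases le_total r 1 with h | h
  · have h1 : r ^ m ≤ 1 := pow_le_one₀ hr h
    have h2 : (0:ℝ) ≤ r ^ K := pow_nonneg hr K
    linarith
  · have h1 : r ^ m ≤ r ^ K := pow_le_pow_right₀ h hm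
    linarith

private lemma powHelper2 {r c : ℝ} (hr : 0 ≤ r) (hc : 0 ≤ c) {m K : ℕ} (hm : m ≤ K) :
    (r + c) ^ m ≤ (1 + c) ^ K * (1 + r ^ K) := by
  have hc1 : (1:ℝ) ≤ 1 + c := by linarith
  have hK : (1 + c) ^ m ≤ (1 + c) ^ K := pow_le_pow_right₀ hc1 hm
  have hrK : (0:ℝ) ≤ r ^ K := pow_nonneg hr K
  have h1cK : (0:ℝ) ≤ (1 + c) ^ K := by positivity
  rcases le_total r 1 with h | h
  · have : (r + c) ^ m ≤ (1 + c) ^ m := pow_le_pow_left₀ (by linarith) (by linarith) m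
    nlinarith
  · have h1 : (r + c) ^ m ≤ (r * (1 + c)) ^ m := by
      apply pow_le_pow_left₀ (by linarith)
      nlinarith
    have h2 : (r * (1 + c)) ^ m = r ^ m * (1 + c) ^ m := mul_pow r _ m
    have h3 : r ^ m ≤ r ^ K := pow_le_pow_right₀ h hm
    have h4 : r ^ m * (1 + c) ^ m ≤ r ^ K * (1 + c) ^ K := by
      apply mul_le_mul h3 hK (by positivity) hrK
    nlinarith

private lemma momentBound {Ω : Type*} [MeasurableSpace Ω] {μ : Measure Ω} [IsProbabilityMeasure μ]
    {Y : ℕ → Ω → ℝ} {K : ℕ}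
    (hmeas : ∀ i, Measurable (Y i))
    (hind : iIndepFun Y μ)
    (hid : ∀ i, IdentDistrib (Y i) (Y 0) μ μ)
    (hint : ∀ m, m ≤ K → Integrable (fun ω => |Y 0 ω| ^ m) μ)
    (hzero : ∫ ω, Y 0 ω ∂μ = 0)
    {M : ℝ} (hM : M = 1 + ∫ ω, |Y 0 ω| ^ K ∂μ)
    {j : ℕ} (hj : j ≤ K) {n : ℕ} (hn : 1 ≤ n) :
    Integrable (fun ω => (∑ i ∈ Finset.range n, Y i ω) ^ j) μ ∧
    |∫ ω, (∑ i ∈ Finset.range n, Y i ω) ^ j ∂μ| ≤ ((j:ℝ) ^ j * M ^ j) * (n:ℝ) ^ (j / 2) := by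
  classical
  have hM1 : (1:ℝ) ≤ M := by
    rw [hM]
    have : 0 ≤ ∫ ω, |Y 0 ω| ^ K ∂μ := integral_nonneg fun ω => by positivity
    linarith
  have hM0 : (0:ℝ) ≤ M := le_trans zero_le_one hM1
  -- integrability of powers
  have intY : ∀ i m, m ≤ K → Integrable (fun ω => Y i ω ^ m) μ := by
    intro i m hm
    have h0 : Integrable (fun ω => Y 0 ω ^ m) μ := by
      refine (hint m hm).mono' (((hmeas 0).pow_const m).aestronglyMeasurable)
        (ae_of_all _ fun ω => ?_)
      rw [Real.norm_eq_abs, abs_pow]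
    have hidm : IdentDistrib (fun ω => Y i ω ^ m) (fun ω => Y 0 ω ^ m) μ μ :=
      (hid i).comp (measurable_id.pow_const m)
    exact hidm.integrable_iff.mpr h0
  have intEq : ∀ i m, ∫ ω, Y i ω ^ m ∂μ = ∫ ω, Y 0 ω ^ m ∂μ := fun i m =>
    ((hid i).comp (measurable_id.pow_const m)).integral_eq
  have absBnd : ∀ m, m ≤ K → |∫ ω, Y 0 ω ^ m ∂μ| ≤ M := by
    intro m hm
    have h1 : |∫ ω, Y 0 ω ^ m ∂μ| ≤ ∫ ω, |Y 0 ω| ^ m ∂μ := by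
      have h := norm_integral_le_integral_norm (fun ω => Y 0 ω ^ m) (μ := μ)
      simpa [Real.norm_eq_abs, abs_pow] using h
    have h2 : ∫ ω, |Y 0 ω| ^ m ∂μ ≤ ∫ ω, (1 + |Y 0 ω| ^ K) ∂μ := by
      refine integral_mono (hint m hm) ((integrable_const 1).add (hint K le_rfl)) fun ω => ?_
      exact powHelper (abs_nonneg _) hm
    have h3 : ∫ ω, (1 + |Y 0 ω| ^ K) ∂μ = M := by
      rw [integral_add (integrable_const 1) (hint K le_rfl), integral_const]
      simp [hM]
    linarith
  -- analysis of a single multinomial term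
  have term : ∀ g : Fin j → ℕ,
      Integrable (fun ω => ∏ p : Fin j, Y (g p) ω) μ ∧
      |∫ ω, ∏ p : Fin j, Y (g p) ω ∂μ| ≤ M ^ j ∧
      ((Finset.image g Finset.univ).card ≤ j / 2 ∨
        ∫ ω, ∏ p : Fin j, Y (g p) ω ∂μ = 0) := by
    intro g
    set A := Finset.image g Finset.univ with hA
    set m : ℕ → ℕ := fun b => (Finset.univ.filter fun p => g p = b).card with hmdef
    have hptw : ∀ ω, ∏ p : Fin j, Y (g p) ω = ∏ b ∈ A, Y b ω ^ m b := fun ω =>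
      Finset.prod_comp (fun b => Y b ω) g
    have hsum : ∑ b ∈ A, m b = j := by
      have h := Finset.card_eq_sum_card_image g (Finset.univ : Finset (Fin j))
      simpa using h.symm
    have hmle : ∀ b ∈ A, m b ≤ K := fun b hb =>
      le_trans (le_trans (Finset.single_le_sum (f := m) (fun _ _ => Nat.zero_le _) hb)
        hsum.le) hj
    have hm1 : ∀ b ∈ A, 1 ≤ m b := by
      intro b hb
      obtain ⟨p, -, hp⟩ := Finset.mem_image.mp hb
      exact Finset.card_pos.mpr ⟨p, by simp [hp]⟩
    have hintb : ∀ b, Integrable (fun ω => Y b ω ^ m b) μ := by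
      intro b
      by_cases hb : b ∈ A
      · exact intY b (m b) (hmle b hb)
      · have : m b = 0 := by
          rw [hmdef]
          simp only [Finset.card_eq_zero, Finset.filter_eq_empty_iff]
          intro p _
          exact fun h => hb (h ▸ Finset.mem_image_of_mem g (Finset.mem_univ p))
        simp only [this, pow_zero]
        exact integrable_const 1
    have hindPow : iIndepFun (fun b ω => Y b ω ^ m b) μ :=
      hind.comp (fun b x => x ^ m b) (fun b => measurable_id.pow_const (m b))
    have base := indepProdInt hindPow (fun b => (hmeas b).pow_const (m b)) hintb A
    have heq : (fun ω => ∏ p : Fin j, Y (g p) ω) = fun ω => ∏ b ∈ A, Y b ω ^ m b :=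
      funext hptw
    have hval : ∫ ω, ∏ p : Fin j, Y (g p) ω ∂μ = ∏ b ∈ A, ∫ ω, Y 0 ω ^ m b ∂μ := by
      rw [heq, base.2]
      exact Finset.prod_congr rfl fun b _ => intEq b (m b)
    refine ⟨heq ▸ base.1, ?_, ?_⟩
    · rw [hval, Finset.abs_prod]
      calc (∏ b ∈ A, |∫ ω, Y 0 ω ^ m b ∂μ|) ≤ ∏ _b ∈ A, M :=
            Finset.prod_le_prod (fun b _ => abs_nonneg _) (fun b hb => absBnd (m b) (hmle b hb))
        _ = M ^ A.card := Finset.prod_const M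
        _ ≤ M ^ j := pow_le_pow_right₀ hM1 (le_trans Finset.card_image_le (by simp))
    · by_cases hcard : A.card ≤ j / 2
      · exact Or.inl hcard
      · right
        have hsome : ∃ b ∈ A, m b = 1 := by
          by_contra hno
          push_neg at hno
          have h2 : ∀ b ∈ A, 2 ≤ m b := fun b hb =>
            lt_of_le_of_ne (hm1 b hb) (fun h => hno b hb h.symm)
          have : A.card * 2 ≤ j := by
            calc A.card * 2 = ∑ _b ∈ A, 2 := by rw [Finset.sum_const, smul_eq_mul]
              _ ≤ ∑ b ∈ A, m b := Finset.sum_le_sum h2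
              _ = j := hsum
          exact hcard (Nat.le_div_iff_mul_le two_pos |>.mpr this)
        obtain ⟨b, hb, hb1⟩ := hsome
        rw [hval]
        refine Finset.prod_eq_zero hb ?_
        rw [hb1]; simpa using hzero
  -- multinomial expansion
  set P := Fintype.piFinset (fun _ : Fin j => Finset.range n) with hPdef
  have hexp : (fun ω => (∑ i ∈ Finset.range n, Y i ω) ^ j)
      = fun ω => ∑ g ∈ P, ∏ p : Fin j, Y (g p) ω := by
    funext ω
    calc (∑ i ∈ Finset.range n, Y i ω) ^ j
        = ∏ _p : Fin j, ∑ i ∈ Finset.range n, Y i ω := by simp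
      _ = ∑ g ∈ P, ∏ p : Fin j, Y (g p) ω := Finset.prod_univ_sum _ _
  have hIntS : Integrable (fun ω => (∑ i ∈ Finset.range n, Y i ω) ^ j) μ := by
    rw [hexp]
    exact integrable_finset_sum _ fun g _ => (term g).1
  refine ⟨hIntS, ?_⟩
  have hIval : ∫ ω, (∑ i ∈ Finset.range n, Y i ω) ^ j ∂μ
      = ∑ g ∈ P, ∫ ω, ∏ p : Fin j, Y (g p) ω ∂μ := by
    rw [hexp]
    exact integral_finset_sum _ fun g _ => (term g).1
  rw [hIval]
  set Q := P.filter (fun g => (Finset.image g Finset.univ).card ≤ j / 2) with hQdef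
  have hfil : ∑ g ∈ P, |∫ ω, ∏ p : Fin j, Y (g p) ω ∂μ|
      = ∑ g ∈ Q, |∫ ω, ∏ p : Fin j, Y (g p) ω ∂μ| := by
    refine (Finset.sum_filter_of_ne ?_).symm
    intro g _ hne
    rcases (term g).2.2 with h | h
    · exact h
    · exact absurd (by rw [h, abs_zero]) hne
  have hcount : (Q.card : ℝ) ≤ ((j / 2 : ℕ) : ℝ) ^ j * (n:ℝ) ^ (j / 2) := by
    have := countLemma j (j / 2) n hn
    calc (Q.card : ℝ) ≤ (((j / 2) ^ j * n ^ (j / 2) : ℕ) : ℝ) := by exact_mod_cast this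
      _ = ((j / 2 : ℕ) : ℝ) ^ j * (n:ℝ) ^ (j / 2) := by push_cast; ring
  calc |∑ g ∈ P, ∫ ω, ∏ p : Fin j, Y (g p) ω ∂μ|
      ≤ ∑ g ∈ P, |∫ ω, ∏ p : Fin j, Y (g p) ω ∂μ| := Finset.abs_sum_le_sum_abs _ _
    _ = ∑ g ∈ Q, |∫ ω, ∏ p : Fin j, Y (g p) ω ∂μ| := hfil
    _ ≤ ∑ _g ∈ Q, M ^ j := Finset.sum_le_sum fun g _ => (term g).2.1
    _ = Q.card * M ^ j := by rw [Finset.sum_const, nsmul_eq_mul]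
    _ ≤ (((j / 2 : ℕ) : ℝ) ^ j * (n:ℝ) ^ (j / 2)) * M ^ j := by
        apply mul_le_mul_of_nonneg_right hcount (by positivity)
    _ ≤ ((j:ℝ) ^ j * M ^ j) * (n:ℝ) ^ (j / 2) := by
        have h1 : ((j / 2 : ℕ) : ℝ) ^ j ≤ (j:ℝ) ^ j := by
          apply pow_le_pow_left₀ (by positivity)
          exact_mod_cast Nat.div_le_self j 2
        have h2 : (0:ℝ) ≤ (n:ℝ) ^ (j / 2) := by positivity
        have h3 : (0:ℝ) ≤ M ^ j := by positivity
        nlinarith [mul_le_mul_of_nonneg_right h1 h2]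


/-- Theorem `devavasym`: for i.i.d. `X, X₁, X₂, …` whose first `k`
moments exist, with mean `μ* = E[X]`, we have `E[(μ̂_n − μ*)^k] = O(n^{−⌈k/2⌉})`.
(Here `⌈k/2⌉ = (k+1)/2` in natural-number division.) -/
theorem modML_pow_dev
    {Ω : Type*} [MeasurableSpace Ω] (μ : Measure Ω) [IsProbabilityMeasure μ]
    (X : ℕ → Ω → ℝ)
    (hmeas : ∀ i, Measurable (X i))
    (hindep : iIndepFun X μ)
    (hident : ∀ i, IdentDistrib (X i) (X 0) μ μ)
    (μstar : ℝ) (hμstar : μstar = ∫ ω, X 0 ω ∂μ)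
    (x₀ n₀ : ℝ) (hn₀ : 0 < n₀)
    (k : ℕ)
    (hmom : Integrable (fun ω => |X 0 ω| ^ k) μ) :
    ∃ C : ℝ, ∀ n : ℕ, 1 ≤ n →
      |∫ ω, (modML x₀ n₀ X n ω - μstar) ^ k ∂μ| ≤ C / (n : ℝ) ^ ((k + 1) / 2) := by
  classical
  rcases Nat.eq_zero_or_pos k with hk0 | hk1
  · subst hk0
    exact ⟨1, fun n hn => by simp⟩
  -- main case : 1 ≤ k
  set Y : ℕ → Ω → ℝ := fun i ω => X i ω - μstar with hY
  have hYmeas : ∀ i, Measurable (Y i) := fun i => (hmeas i).sub measurable_const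
  have hsubmeas : Measurable (fun x : ℝ => x - μstar) := measurable_id.sub measurable_const
  have hYind : iIndepFun Y μ :=
    hindep.comp (fun _ x => x - μstar) (fun _ => hsubmeas)
  have hYid : ∀ i, IdentDistrib (Y i) (Y 0) μ μ := fun i => (hident i).comp hsubmeas
  have hint' : ∀ m, m ≤ k → Integrable (fun ω => |Y 0 ω| ^ m) μ := by
    intro m hm
    have hbnd : Integrable (fun ω => (1 + |μstar|) ^ k * (1 + |X 0 ω| ^ k)) μ :=
      ((integrable_const 1).add hmom).const_mul _
    refine hbnd.mono' ((((hmeas 0).sub measurable_const).abs.pow_const m).aestronglyMeasurable)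
      (ae_of_all _ fun ω => ?_)
    rw [Real.norm_eq_abs, abs_of_nonneg (by positivity : (0:ℝ) ≤ |Y 0 ω| ^ m)]
    have h1 : |Y 0 ω| ≤ |X 0 ω| + |μstar| := abs_sub (X 0 ω) μstar
    calc |Y 0 ω| ^ m ≤ (|X 0 ω| + |μstar|) ^ m :=
          pow_le_pow_left₀ (abs_nonneg _) h1 m
      _ ≤ (1 + |μstar|) ^ k * (1 + |X 0 ω| ^ k) :=
          powHelper2 (abs_nonneg _) (abs_nonneg _) hm
  have hX0int : Integrable (X 0) μ := by
    refine ((integrable_const 1).add hmom).mono' (hmeas 0).aestronglyMeasurable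
      (ae_of_all _ fun ω => ?_)
    rw [Real.norm_eq_abs]
    have := powHelper (abs_nonneg (X 0 ω)) hk1
    simpa using this
  have hzero : ∫ ω, Y 0 ω ∂μ = 0 := by
    rw [hY]
    simp only
    rw [integral_sub hX0int (integrable_const μstar), integral_const]
    simp [hμstar]
  set M : ℝ := 1 + ∫ ω, |Y 0 ω| ^ k ∂μ with hMdef
  have hM1 : (1:ℝ) ≤ M := by
    have : 0 ≤ ∫ ω, |Y 0 ω| ^ k ∂μ := integral_nonneg fun ω => by positivity
    rw [hMdef]; linarith
  have key : ∀ j, j ≤ k → ∀ n : ℕ, 1 ≤ n →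
      Integrable (fun ω => (∑ i ∈ Finset.range n, Y i ω) ^ j) μ ∧
      |∫ ω, (∑ i ∈ Finset.range n, Y i ω) ^ j ∂μ| ≤ ((j:ℝ) ^ j * M ^ j) * (n:ℝ) ^ (j / 2) :=
    fun j hj n hn => momentBound hYmeas hYind hYid hint' hzero hMdef hj hn
  set a : ℝ := n₀ * (x₀ - μstar) with hadef
  refine ⟨(∑ m ∈ Finset.range (k+1), |a| ^ m * (k.choose m : ℝ)) * ((k:ℝ) ^ k * M ^ k),
    fun n hn => ?_⟩
  set C₀ : ℝ := (∑ m ∈ Finset.range (k+1), |a| ^ m * (k.choose m : ℝ)) * ((k:ℝ) ^ k * M ^ k)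
    with hC₀def
  have hn1 : (1:ℝ) ≤ (n:ℝ) := by exact_mod_cast hn
  have hnpos : (0:ℝ) < (n:ℝ) := by linarith
  set d : ℝ := (n:ℝ) + n₀ with hddef
  have hdpos : (0:ℝ) < d := by rw [hddef]; linarith
  have hrw : ∀ ω, modML x₀ n₀ X n ω - μstar
      = (a + ∑ i ∈ Finset.range n, Y i ω) / d := by
    intro ω
    rw [modML, hY, hadef, hddef]
    simp only [Finset.sum_sub_distrib, Finset.sum_const, Finset.card_range, nsmul_eq_mul]
    field_simp
    ring
  -- step 1 : pull out the denominator
  have h1 : ∫ ω, (modML x₀ n₀ X n ω - μstar) ^ k ∂μ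
      = (d ^ k)⁻¹ * ∫ ω, (a + ∑ i ∈ Finset.range n, Y i ω) ^ k ∂μ := by
    rw [← integral_const_mul]
    congr 1
    funext ω
    rw [hrw ω, div_pow]
    ring
  -- step 2 : binomial expansion
  have hterm : ∀ m, Integrable
      (fun ω => a ^ m * (∑ i ∈ Finset.range n, Y i ω) ^ (k - m) * (k.choose m : ℝ)) μ :=
    fun m => ((key (k - m) (Nat.sub_le k m) n hn).1.const_mul _).mul_const _
  have h2 : ∫ ω, (a + ∑ i ∈ Finset.range n, Y i ω) ^ k ∂μ
      = ∑ m ∈ Finset.range (k+1),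
          a ^ m * (∫ ω, (∑ i ∈ Finset.range n, Y i ω) ^ (k - m) ∂μ) * (k.choose m : ℝ) := by
    have hpt : (fun ω => (a + ∑ i ∈ Finset.range n, Y i ω) ^ k)
        = fun ω => ∑ m ∈ Finset.range (k+1),
            a ^ m * (∑ i ∈ Finset.range n, Y i ω) ^ (k - m) * (k.choose m : ℝ) := by
      funext ω
      rw [add_pow]
    rw [hpt, integral_finset_sum _ (fun m _ => hterm m)]
    refine Finset.sum_congr rfl fun m _ => ?_
    rw [integral_mul_const, integral_const_mul]
  -- step 3 : bound the sum
  have hjk : ∀ jj, jj ≤ k → ((jj:ℝ) ^ jj * M ^ jj) * (n:ℝ) ^ (jj / 2)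
      ≤ ((k:ℝ) ^ k * M ^ k) * (n:ℝ) ^ (k / 2) := by
    intro jj hjj
    have hk1' : (1:ℝ) ≤ (k:ℝ) := by exact_mod_cast hk1
    have e1 : (jj:ℝ) ^ jj ≤ (k:ℝ) ^ k :=
      le_trans (pow_le_pow_left₀ (by positivity) (by exact_mod_cast hjj) jj)
        (pow_le_pow_right₀ hk1' hjj)
    have e2 : M ^ jj ≤ M ^ k := pow_le_pow_right₀ hM1 hjj
    have e3 : (n:ℝ) ^ (jj / 2) ≤ (n:ℝ) ^ (k / 2) :=
      pow_le_pow_right₀ hn1 (Nat.div_le_div_right hjj)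
    have e4 : (jj:ℝ) ^ jj * M ^ jj ≤ (k:ℝ) ^ k * M ^ k :=
      mul_le_mul e1 e2 (by positivity) (by positivity)
    exact mul_le_mul e4 e3 (by positivity) (by positivity)
  have h3 : |∫ ω, (a + ∑ i ∈ Finset.range n, Y i ω) ^ k ∂μ| ≤ C₀ * (n:ℝ) ^ (k / 2) := by
    rw [h2]
    calc |∑ m ∈ Finset.range (k+1),
          a ^ m * (∫ ω, (∑ i ∈ Finset.range n, Y i ω) ^ (k - m) ∂μ) * (k.choose m : ℝ)|
        ≤ ∑ m ∈ Finset.range (k+1),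
          |a ^ m * (∫ ω, (∑ i ∈ Finset.range n, Y i ω) ^ (k - m) ∂μ) * (k.choose m : ℝ)| :=
          Finset.abs_sum_le_sum_abs _ _
      _ ≤ ∑ m ∈ Finset.range (k+1),
          |a| ^ m * (k.choose m : ℝ) * (((k:ℝ) ^ k * M ^ k) * (n:ℝ) ^ (k / 2)) := by
          refine Finset.sum_le_sum fun m _ => ?_
          rw [abs_mul, abs_mul, abs_pow]
          have hb := le_trans (key (k - m) (Nat.sub_le k m) n hn).2
            (hjk (k - m) (Nat.sub_le k m))
          have hcabs : |((k.choose m : ℕ) : ℝ)| = (k.choose m : ℝ) := by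
            rw [abs_of_nonneg]; positivity
          rw [hcabs]
          calc |a| ^ m * |∫ ω, (∑ i ∈ Finset.range n, Y i ω) ^ (k - m) ∂μ| * (k.choose m : ℝ)
              ≤ |a| ^ m * (((k:ℝ) ^ k * M ^ k) * (n:ℝ) ^ (k / 2)) * (k.choose m : ℝ) := by
                have := mul_le_mul_of_nonneg_left hb (by positivity : (0:ℝ) ≤ |a| ^ m)
                exact mul_le_mul_of_nonneg_right this (by positivity)
            _ = |a| ^ m * (k.choose m : ℝ) * (((k:ℝ) ^ k * M ^ k) * (n:ℝ) ^ (k / 2)) := by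
                ring
      _ = C₀ * (n:ℝ) ^ (k / 2) := by
          rw [hC₀def, ← Finset.sum_mul]
          ring
  -- step 4 : conclude
  have hC₀nonneg : 0 ≤ C₀ := by
    rw [hC₀def]
    have : 0 ≤ ∑ m ∈ Finset.range (k+1), |a| ^ m * (k.choose m : ℝ) :=
      Finset.sum_nonneg fun m _ => by positivity
    have hMk : (0:ℝ) ≤ M ^ k := by positivity
    positivity
  have hdn : (n:ℝ) ^ k ≤ d ^ k := pow_le_pow_left₀ (by positivity) (by rw [hddef]; linarith) k
  have hinv : (d ^ k)⁻¹ ≤ ((n:ℝ) ^ k)⁻¹ := by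
    apply inv_anti₀ (by positivity) hdn
  have hsplit : (n:ℝ) ^ k = (n:ℝ) ^ (k / 2) * (n:ℝ) ^ ((k + 1) / 2) := by
    rw [← pow_add]
    congr 1
    omega
  rw [h1, abs_mul, abs_of_nonneg (by positivity : (0:ℝ) ≤ (d ^ k)⁻¹)]
  calc (d ^ k)⁻¹ * |∫ ω, (a + ∑ i ∈ Finset.range n, Y i ω) ^ k ∂μ|
      ≤ (d ^ k)⁻¹ * (C₀ * (n:ℝ) ^ (k / 2)) :=
        mul_le_mul_of_nonneg_left h3 (by positivity)
    _ ≤ ((n:ℝ) ^ k)⁻¹ * (C₀ * (n:ℝ) ^ (k / 2)) :=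
        mul_le_mul_of_nonneg_right hinv (by positivity)
    _ = C₀ / (n:ℝ) ^ ((k + 1) / 2) := by
        rw [hsplit]
        have h1' : (n:ℝ) ^ (k / 2) ≠ 0 := by positivity
        have h2' : (n:ℝ) ^ ((k + 1) / 2) ≠ 0 := by positivity
        field_simp
end

section
/- Let X, X₁, X₂, … be i.i.d. real random variables, let μ* = E[X], and define μ̂_n = (n₀·x₀ + ∑_{i=1}^n X_i)/(n + n₀) for fixed constants x₀ ∈ ℝ and n₀ > 0. Let k be a positive even integer with E[|X|^k] < ∞. Then P(|μ̂_n − μ*| ≥ δ) = O(n^{−k/2}·δ^{−k}); that is, there exists a constant C such that for all n ≥ 1 and all δ > 0, P(|μ̂_n − μ*| ≥ δ) ≤ C·n^{−k/2}·δ^{−k}. -/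
open MeasureTheory ProbabilityTheory Finset
open scoped ENNReal

section
variable {Ω : Type*} [MeasurableSpace Ω] {μ : Measure Ω} [IsProbabilityMeasure μ]

lemma abs_pow_integrable
    {f : Ω → ℝ} {k : ℕ} (hf : MemLp f (k : ℝ≥0∞) μ) {j : ℕ} (hj : j ≤ k) :
    Integrable (fun ω => |f ω| ^ j) μ := by
  rcases Nat.eq_zero_or_pos j with rfl | hj0
  · simpa using integrable_const (1 : ℝ)
  have hfj : MemLp f (j : ℝ≥0∞) μ :=
    hf.mono_exponent (by exact_mod_cast hj)
  have h := hfj.integrable_norm_rpow (by exact_mod_cast hj0.ne') (by simp)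
  simp only [ENNReal.toReal_natCast] at h
  convert h using 2 with ω
  rw [Real.norm_eq_abs, ← Real.rpow_natCast]

lemma pow_integrable
    {f : Ω → ℝ} {k : ℕ} (hf : MemLp f (k : ℝ≥0∞) μ) {j : ℕ} (hj : j ≤ k) :
    Integrable (fun ω => f ω ^ j) μ := by
  refine (abs_pow_integrable hf hj).mono' ?_ (Filter.Eventually.of_forall fun ω => ?_)
  · exact (hf.aestronglyMeasurable.aemeasurable.pow_const j).aestronglyMeasurable
  · simp [abs_pow]

lemma memLp_of_integrable_abs_pow
    {f : Ω → ℝ} (hfm : AEStronglyMeasurable f μ) {k : ℕ} (hk : k ≠ 0)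
    (h : Integrable (fun ω => |f ω| ^ k) μ) : MemLp f (k : ℝ≥0∞) μ := by
  have hk' : (k : ℝ≥0∞) ≠ 0 := by exact_mod_cast hk
  refine (memLp_norm_rpow_iff (p := (k : ℝ≥0∞)) hfm hk' (by simp)).mp ?_
  rw [ENNReal.div_self hk' (by simp)]
  rw [memLp_one_iff_integrable]
  convert h using 2 with ω
  rw [Real.norm_eq_abs, ENNReal.toReal_natCast, Real.rpow_natCast]

lemma sum_pow_moment_bound
    (Y : ℕ → Ω → ℝ) (hmeas : ∀ i, Measurable (Y i))
    (hindep : iIndepFun Y μ)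
    (hident : ∀ i, IdentDistrib (Y i) (Y 0) μ μ)
    (k : ℕ) (hk : k ≠ 0) (hmom : MemLp (Y 0) (k : ℝ≥0∞) μ)
    (hmean : ∫ ω, Y 0 ω ∂μ = 0) :
    ∀ m, m ≤ k → ∃ D : ℝ, 0 ≤ D ∧ ∀ j, j ≤ m → ∀ n : ℕ,
      |∫ ω, (∑ i ∈ Finset.range n, Y i ω) ^ j ∂μ| ≤ D * (n : ℝ) ^ (j / 2) := by
  -- basic facts
  have hYk : ∀ i, MemLp (Y i) (k : ℝ≥0∞) μ := fun i => (hident i).memLp_iff.mpr hmom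
  have hSk : ∀ n, MemLp (fun ω => ∑ i ∈ Finset.range n, Y i ω) (k : ℝ≥0∞) μ := by
    intro n
    have h := memLp_finset_sum' (Finset.range n) (fun i (_ : i ∈ Finset.range n) => hYk i)
    have heq : (∑ i ∈ Finset.range n, Y i) = fun ω => ∑ i ∈ Finset.range n, Y i ω := by
      funext ω; simp
    rwa [heq] at h
  have hSint : ∀ n j, j ≤ k → Integrable (fun ω => (∑ i ∈ Finset.range n, Y i ω) ^ j) μ :=
    fun n j hj => pow_integrable (hSk n) hj
  have hYint : ∀ i j, j ≤ k → Integrable (fun ω => Y i ω ^ j) μ :=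
    fun i j hj => pow_integrable (hYk i) hj
  have hMi : ∀ i j, (∫ ω, Y i ω ^ j ∂μ) = ∫ ω, Y 0 ω ^ j ∂μ := by
    intro i j
    exact ((hident i).comp (measurable_id.pow_const j)).integral_eq
  set B : ℝ := 1 + ∫ ω, |Y 0 ω| ^ k ∂μ with hBdef
  have hB1 : 1 ≤ B := by
    have : 0 ≤ ∫ ω, |Y 0 ω| ^ k ∂μ :=
      integral_nonneg fun ω => pow_nonneg (abs_nonneg _) _
    linarith
  have hM : ∀ j, j ≤ k → |∫ ω, Y 0 ω ^ j ∂μ| ≤ B := by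
    intro j hj
    have h1 : |∫ ω, Y 0 ω ^ j ∂μ| ≤ ∫ ω, |Y 0 ω ^ j| ∂μ := by
      simpa [Real.norm_eq_abs] using
        norm_integral_le_integral_norm (μ := μ) (f := fun ω => Y 0 ω ^ j)
    have h2 : ∫ ω, |Y 0 ω ^ j| ∂μ ≤ ∫ ω, (1 + |Y 0 ω| ^ k) ∂μ := by
      refine integral_mono ((hYint 0 j hj).abs)
        ((integrable_const (1:ℝ)).add (abs_pow_integrable hmom le_rfl)) ?_
      intro ω
      show |Y 0 ω ^ j| ≤ 1 + |Y 0 ω| ^ k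
      rw [abs_pow]
      rcases le_or_gt (|Y 0 ω|) 1 with h | h
      · have := pow_le_one₀ (n := j) (abs_nonneg _) h
        nlinarith [pow_nonneg (abs_nonneg (Y 0 ω)) k]
      · have := pow_le_pow_right₀ h.le hj
        nlinarith
    have h3 : ∫ ω, (1 + |Y 0 ω| ^ k) ∂μ = B := by
      rw [integral_add (integrable_const _) (abs_pow_integrable hmom le_rfl)]
      simp [hBdef]
    linarith
  -- mean of partial sums is zero
  have hS1 : ∀ n, (∫ ω, ∑ i ∈ Finset.range n, Y i ω ∂μ) = 0 := by
    intro n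
    rw [integral_finset_sum _ (fun i _ => by
      simpa using hYint i 1 (Nat.one_le_iff_ne_zero.mpr hk))]
    refine Finset.sum_eq_zero fun i _ => ?_
    rw [(hident i).integral_eq, hmean]
  -- the key recurrence
  have key : ∀ n j, j ≤ k →
      (∫ ω, (∑ i ∈ Finset.range (n + 1), Y i ω) ^ j ∂μ)
        = ∑ i ∈ Finset.range (j + 1), (j.choose i : ℝ) *
            (∫ ω, (∑ l ∈ Finset.range n, Y l ω) ^ i ∂μ) * (∫ ω, Y 0 ω ^ (j - i) ∂μ) := by
    intro n j hj
    have hSY : IndepFun (fun ω => ∑ l ∈ Finset.range n, Y l ω) (Y n) μ := by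
      have h := hindep.indepFun_sum_range_succ hmeas n
      have : (∑ l ∈ Finset.range n, Y l) = fun ω => ∑ l ∈ Finset.range n, Y l ω := by
        funext ω; simp
      rwa [this] at h
    have hterm : ∀ i ∈ Finset.range (j + 1),
        Integrable (fun ω => (∑ l ∈ Finset.range n, Y l ω) ^ i * Y n ω ^ (j - i)
          * (j.choose i : ℝ)) μ := by
      intro i hi
      have hi' : i ≤ k := le_trans (Nat.le_of_lt_succ (Finset.mem_range.mp hi)) hj
      have hpow : IndepFun (fun ω => (∑ l ∈ Finset.range n, Y l ω) ^ i)
          (fun ω => Y n ω ^ (j - i)) μ :=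
        hSY.comp (measurable_id.pow_const i) (measurable_id.pow_const (j - i))
      exact (hpow.integrable_mul (hSint n i hi') (hYint n (j - i) (le_trans (Nat.sub_le _ _) hj))).mul_const _
    calc (∫ ω, (∑ i ∈ Finset.range (n + 1), Y i ω) ^ j ∂μ)
        = ∫ ω, ∑ i ∈ Finset.range (j + 1), (∑ l ∈ Finset.range n, Y l ω) ^ i
              * Y n ω ^ (j - i) * (j.choose i : ℝ) ∂μ := by
          congr 1; funext ω; rw [Finset.sum_range_succ, add_pow]
      _ = ∑ i ∈ Finset.range (j + 1), ∫ ω, (∑ l ∈ Finset.range n, Y l ω) ^ i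
              * Y n ω ^ (j - i) * (j.choose i : ℝ) ∂μ := integral_finset_sum _ hterm
      _ = ∑ i ∈ Finset.range (j + 1), (j.choose i : ℝ) *
            (∫ ω, (∑ l ∈ Finset.range n, Y l ω) ^ i ∂μ) * (∫ ω, Y 0 ω ^ (j - i) ∂μ) := by
          refine Finset.sum_congr rfl fun i hi => ?_
          have hi' : i ≤ k := le_trans (Nat.le_of_lt_succ (Finset.mem_range.mp hi)) hj
          have hpow : IndepFun (fun ω => (∑ l ∈ Finset.range n, Y l ω) ^ i)
              (fun ω => Y n ω ^ (j - i)) μ :=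
            hSY.comp (measurable_id.pow_const i) (measurable_id.pow_const (j - i))
          rw [integral_mul_const, hpow.integral_fun_mul_eq_mul_integral (hSint n i hi').aestronglyMeasurable
            (hYint n (j - i) (le_trans (Nat.sub_le _ _) hj)).aestronglyMeasurable, hMi n]
          ring
  -- outer induction on m
  intro m
  induction m with
  | zero =>
    intro _
    refine ⟨1, zero_le_one, ?_⟩
    intro j hj n
    interval_cases j
    simp
  | succ m ih =>
    intro hmk
    obtain ⟨D, hD0, hD⟩ := ih (Nat.le_of_succ_le hmk)
    have h2k : (0:ℝ) ≤ 2 ^ k := by positivity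
    have hB0 : (0:ℝ) ≤ B := le_trans zero_le_one hB1
    have hX : (0:ℝ) ≤ 2 ^ k * D * B := mul_nonneg (mul_nonneg h2k hD0) hB0
    set D' : ℝ := D + B + 2 ^ k * D * B with hD'def
    have hD'0 : 0 ≤ D' := by linarith
    have hDD' : D ≤ D' := by linarith
    have hBD' : B ≤ D' := by linarith
    have h2kD : 2 ^ k * D * B ≤ D' := by linarith
    refine ⟨D', hD'0, ?_⟩
    intro j hj n
    rcases eq_or_lt_of_le hj with heq | hlt
    swap
    · exact le_trans (hD j (Nat.lt_succ_iff.mp hlt) n)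
        (mul_le_mul_of_nonneg_right hDD' (by positivity))
    subst heq
    rcases Nat.eq_zero_or_pos m with rfl | hm1
    · -- j = 1
      have h0 : (∫ ω, (∑ i ∈ Finset.range n, Y i ω) ^ (0+1) ∂μ) = 0 := by
        simpa using hS1 n
      rw [h0]
      simp only [abs_zero]
      positivity
    · -- j = m + 1, m ≥ 1 : induction on n
      induction n with
      | zero =>
        simp only [Finset.range_zero, Finset.sum_empty, zero_pow (Nat.succ_ne_zero m),
          integral_zero, abs_zero, Nat.cast_zero]
        positivity
      | succ n ihn =>
        rcases Nat.eq_zero_or_pos n with rfl | hn1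
        · have h1 : (∫ ω, (∑ i ∈ Finset.range (0+1), Y i ω) ^ (m+1) ∂μ)
              = ∫ ω, Y 0 ω ^ (m+1) ∂μ := by
            simp [Finset.sum_range_one]
          rw [h1]
          have h2 := hM (m+1) hmk
          have h3 : ((0:ℕ)+1 : ℝ) = 1 := by norm_num
          calc |∫ ω, Y 0 ω ^ (m+1) ∂μ| ≤ B := h2
            _ ≤ D' * ((0+1:ℕ):ℝ) ^ ((m+1)/2) := by
                push_cast
                simp only [one_pow, mul_one]
                linarith
        · -- main step
          rw [key n (m+1) hmk, Finset.sum_range_succ, Finset.sum_range_succ]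
          have hmid : (((m+1).choose m : ℕ):ℝ) *
              (∫ ω, (∑ l ∈ Finset.range n, Y l ω) ^ m ∂μ) *
              (∫ ω, Y 0 ω ^ (m+1-m) ∂μ) = 0 := by
            have hmm : m + 1 - m = 1 := by omega
            rw [hmm]
            simp [hmean]
          have hlast : (((m+1).choose (m+1) : ℕ):ℝ) *
              (∫ ω, (∑ l ∈ Finset.range n, Y l ω) ^ (m+1) ∂μ) *
              (∫ ω, Y 0 ω ^ (m+1-(m+1)) ∂μ)
              = ∫ ω, (∑ l ∈ Finset.range n, Y l ω) ^ (m+1) ∂μ := by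
            simp
          rw [hmid, hlast, add_zero]
          set p := (m+1)/2 with hp
          have hp1 : 1 ≤ p := by omega
          have hnR : (1:ℝ) ≤ (n:ℝ) := by exact_mod_cast hn1
          -- bound each term of the remaining sum
          have hterm_bd : ∀ i ∈ Finset.range m,
              |(((m+1).choose i : ℕ):ℝ) *
                (∫ ω, (∑ l ∈ Finset.range n, Y l ω) ^ i ∂μ) *
                (∫ ω, Y 0 ω ^ (m+1-i) ∂μ)|
              ≤ (((m+1).choose i : ℕ):ℝ) * (D * B * (n:ℝ) ^ (p-1)) := by
            intro i hi
            have hi' := Finset.mem_range.mp hi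
            set a1 := ∫ ω, (∑ l ∈ Finset.range n, Y l ω) ^ i ∂μ with ha1
            set a2 := ∫ ω, Y 0 ω ^ (m+1-i) ∂μ with ha2
            have h1 : |a1| ≤ D * (n:ℝ) ^ (i/2) := hD i (by omega) n
            have h2 : |a2| ≤ B := hM _ (by omega)
            have h3 : (n:ℝ) ^ (i/2) ≤ (n:ℝ) ^ (p-1) :=
              pow_le_pow_right₀ hnR (by omega)
            rw [abs_mul, abs_mul, Nat.abs_cast]
            have hc0 : (0:ℝ) ≤ (((m+1).choose i : ℕ):ℝ) := Nat.cast_nonneg _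
            have hb0 : (0:ℝ) ≤ |a2| := abs_nonneg _
            have hn0 : (0:ℝ) ≤ (n:ℝ) ^ (i/2) := by positivity
            have step : |a1| * |a2| ≤ D * B * (n:ℝ) ^ (p-1) := by
              calc |a1| * |a2| ≤ D * (n:ℝ) ^ (i/2) * B :=
                    mul_le_mul h1 h2 hb0 (mul_nonneg hD0 hn0)
                _ ≤ D * (n:ℝ) ^ (p-1) * B :=
                    mul_le_mul_of_nonneg_right (mul_le_mul_of_nonneg_left h3 hD0) hB0
                _ = D * B * (n:ℝ) ^ (p-1) := by ring
            calc (((m+1).choose i : ℕ):ℝ) * |a1| * |a2|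
                = (((m+1).choose i : ℕ):ℝ) * (|a1| * |a2|) := by rw [mul_assoc]
              _ ≤ (((m+1).choose i : ℕ):ℝ) * (D * B * (n:ℝ) ^ (p-1)) :=
                  mul_le_mul_of_nonneg_left step hc0
          have hchoose : (∑ i ∈ Finset.range m, (((m+1).choose i : ℕ):ℝ)) ≤ 2 ^ k := by
            have h1 : (∑ i ∈ Finset.range m, (m+1).choose i)
                ≤ ∑ i ∈ Finset.range (m+2), (m+1).choose i :=
              Finset.sum_le_sum_of_subset (Finset.range_subset_range.mpr (by omega))
            rw [Nat.sum_range_choose] at h1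
            have h2 : (2:ℕ) ^ (m+1) ≤ 2 ^ k := Nat.pow_le_pow_right (by norm_num) (by omega)
            calc (∑ i ∈ Finset.range m, (((m+1).choose i : ℕ):ℝ))
                = ((∑ i ∈ Finset.range m, (m+1).choose i : ℕ) : ℝ) := by push_cast; ring
              _ ≤ ((2:ℕ)^k : ℝ) := by exact_mod_cast le_trans h1 h2
              _ = 2 ^ k := by push_cast; ring
          have hsum_bd : |∑ i ∈ Finset.range m, (((m+1).choose i : ℕ):ℝ) *
                (∫ ω, (∑ l ∈ Finset.range n, Y l ω) ^ i ∂μ) *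
                (∫ ω, Y 0 ω ^ (m+1-i) ∂μ)|
              ≤ 2 ^ k * (D * B * (n:ℝ) ^ (p-1)) := by
            calc |∑ i ∈ Finset.range m, (((m+1).choose i : ℕ):ℝ) *
                (∫ ω, (∑ l ∈ Finset.range n, Y l ω) ^ i ∂μ) *
                (∫ ω, Y 0 ω ^ (m+1-i) ∂μ)|
                ≤ ∑ i ∈ Finset.range m, |(((m+1).choose i : ℕ):ℝ) *
                (∫ ω, (∑ l ∈ Finset.range n, Y l ω) ^ i ∂μ) *
                (∫ ω, Y 0 ω ^ (m+1-i) ∂μ)| := Finset.abs_sum_le_sum_abs _ _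
              _ ≤ ∑ i ∈ Finset.range m, (((m+1).choose i : ℕ):ℝ) * (D * B * (n:ℝ) ^ (p-1)) :=
                  Finset.sum_le_sum hterm_bd
              _ = (∑ i ∈ Finset.range m, (((m+1).choose i : ℕ):ℝ)) * (D * B * (n:ℝ) ^ (p-1)) := by
                  rw [Finset.sum_mul]
              _ ≤ 2 ^ k * (D * B * (n:ℝ) ^ (p-1)) := by
                  refine mul_le_mul_of_nonneg_right hchoose (by positivity)
          have hgrow : (n:ℝ) ^ p + (n:ℝ) ^ (p-1) ≤ ((n:ℝ)+1) ^ p := by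
            obtain ⟨q, hq⟩ : ∃ q, p = q + 1 := ⟨p-1, by omega⟩
            rw [hq]
            simp only [Nat.add_sub_cancel]
            have h2 : (n:ℝ) ^ q ≤ ((n:ℝ)+1) ^ q :=
              pow_le_pow_left₀ (by positivity) (by linarith) q
            have h4 := mul_le_mul_of_nonneg_left h2 (show (0:ℝ) ≤ (n:ℝ)+1 by positivity)
            have h5 : ((n:ℝ)+1) ^ (q+1) = ((n:ℝ)+1) * ((n:ℝ)+1)^q := by ring
            have h6 : (n:ℝ) ^ (q+1) = (n:ℝ) * (n:ℝ)^q := by ring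
            linarith [h4, h5, h6]
          calc |(∑ i ∈ Finset.range m, (((m+1).choose i : ℕ):ℝ) *
                (∫ ω, (∑ l ∈ Finset.range n, Y l ω) ^ i ∂μ) *
                (∫ ω, Y 0 ω ^ (m+1-i) ∂μ)) +
                (∫ ω, (∑ l ∈ Finset.range n, Y l ω) ^ (m+1) ∂μ)|
              ≤ |∑ i ∈ Finset.range m, (((m+1).choose i : ℕ):ℝ) *
                (∫ ω, (∑ l ∈ Finset.range n, Y l ω) ^ i ∂μ) *
                (∫ ω, Y 0 ω ^ (m+1-i) ∂μ)| +
                |∫ ω, (∑ l ∈ Finset.range n, Y l ω) ^ (m+1) ∂μ| := abs_add_le _ _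
            _ ≤ 2 ^ k * (D * B * (n:ℝ) ^ (p-1)) + D' * (n:ℝ) ^ p := by
                exact add_le_add hsum_bd ihn
            _ ≤ D' * (n:ℝ) ^ (p-1) + D' * (n:ℝ) ^ p := by
                refine add_le_add_left ?_ _
                have : 2 ^ k * (D * B * (n:ℝ) ^ (p-1)) = (2^k * D * B) * (n:ℝ)^(p-1) := by ring
                rw [this]
                exact mul_le_mul_of_nonneg_right h2kD (by positivity)
            _ = D' * ((n:ℝ) ^ p + (n:ℝ) ^ (p-1)) := by ring
            _ ≤ D' * ((↑(n+1):ℝ)) ^ p := by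
                push_cast
                exact mul_le_mul_of_nonneg_left hgrow hD'0

end

/-- Theorem `boundprob`: for i.i.d. `X, X₁, X₂, …` whose first `k`
moments exist (`k` a positive even integer), with mean `μ* = E[X]`, we have the
deviation-probability bound `P(|μ̂_n − μ*| ≥ δ) = O(n^{−k/2} · δ^{−k})`. -/
theorem modML_dev_prob
    {Ω : Type*} [MeasurableSpace Ω] (μ : Measure Ω) [IsProbabilityMeasure μ]
    (X : ℕ → Ω → ℝ)
    (hmeas : ∀ i, Measurable (X i))
    (hindep : iIndepFun X μ)
    (hident : ∀ i, IdentDistrib (X i) (X 0) μ μ)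
    (μstar : ℝ) (hμstar : μstar = ∫ ω, X 0 ω ∂μ)
    (x₀ n₀ : ℝ) (hn₀ : 0 < n₀)
    (k : ℕ) (hk : 0 < k) (hkeven : Even k)
    (hmom : Integrable (fun ω => |X 0 ω| ^ k) μ) :
    ∃ C : ℝ, ∀ n : ℕ, 1 ≤ n → ∀ δ : ℝ, 0 < δ →
      (μ {ω | δ ≤ |modML x₀ n₀ X n ω - μstar|}).toReal
        ≤ C / ((n : ℝ) ^ (k / 2) * δ ^ k) := by
  classical
  set Y : ℕ → Ω → ℝ := fun i ω => X i ω - μstar with hYdef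
  have hYmeas : ∀ i, Measurable (Y i) := fun i => (hmeas i).sub measurable_const
  have hYindep : iIndepFun Y μ :=
    hindep.comp (fun _ => (· - μstar)) (fun _ => measurable_id.sub measurable_const)
  have hYident : ∀ i, IdentDistrib (Y i) (Y 0) μ μ :=
    fun i => (hident i).comp (measurable_id.sub measurable_const)
  have hXk : MemLp (X 0) (k : ℝ≥0∞) μ :=
    memLp_of_integrable_abs_pow (hmeas 0).aestronglyMeasurable hk.ne' hmom
  have hYk : MemLp (Y 0) (k : ℝ≥0∞) μ := hXk.sub (memLp_const μstar)
  have hXint : Integrable (X 0) μ := hXk.integrable (by exact_mod_cast hk)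
  have hmean : (∫ ω, Y 0 ω ∂μ) = 0 := by
    simp only [hYdef]
    rw [integral_sub hXint (integrable_const _)]
    simp [hμstar]
  obtain ⟨D, hD0, hD⟩ := sum_pow_moment_bound Y hYmeas hYindep hYident k hk.ne' hYk hmean k le_rfl
  set a : ℝ := |n₀ * (x₀ - μstar)| with hadef
  have ha0 : 0 ≤ a := abs_nonneg _
  refine ⟨D * 2 ^ k + (2 * a) ^ k + 1, ?_⟩
  intro n hn δ hδ
  have hnR : (1:ℝ) ≤ (n:ℝ) := by exact_mod_cast hn
  have hnpos : (0:ℝ) < (n:ℝ) := lt_of_lt_of_le one_pos hnR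
  have hden : (0:ℝ) < (n:ℝ) ^ (k / 2) * δ ^ k := by positivity
  -- abbreviations
  set S : Ω → ℝ := fun ω => ∑ i ∈ Finset.range n, Y i ω with hSdef
  have hSk : MemLp S (k : ℝ≥0∞) μ := by
    have h := memLp_finset_sum' (Finset.range n)
      (fun i (_ : i ∈ Finset.range n) => (hYident i).memLp_iff.mpr hYk)
    have heq : (∑ i ∈ Finset.range n, Y i) = S := by funext ω; simp [hSdef]
    rwa [heq] at h
  have hSabs_int : Integrable (fun ω => |S ω| ^ k) μ := abs_pow_integrable hSk le_rfl
  have hSmom : (∫ ω, |S ω| ^ k ∂μ) ≤ D * (n:ℝ) ^ (k / 2) := by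
    have heq : (∫ ω, |S ω| ^ k ∂μ) = ∫ ω, S ω ^ k ∂μ := by
      congr 1; funext ω; exact hkeven.pow_abs _
    have hnn : 0 ≤ ∫ ω, S ω ^ k ∂μ :=
      integral_nonneg fun ω => hkeven.pow_nonneg _
    rw [heq, ← abs_of_nonneg hnn]
    exact hD k le_rfl n
  -- rewrite the deviation
  have hc : (0:ℝ) < (n:ℝ) + n₀ := by linarith
  have hrw : ∀ ω, modML x₀ n₀ X n ω - μstar = (n₀ * (x₀ - μstar) + S ω) / ((n:ℝ) + n₀) := by
    intro ω
    have hS' : S ω = (∑ i ∈ Finset.range n, X i ω) - n * μstar := by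
      simp [hSdef, hYdef, Finset.sum_sub_distrib]
    rw [modML, hS']
    field_simp
    ring
  have hnk : (n:ℝ) ^ k = (n:ℝ) ^ (k / 2) * (n:ℝ) ^ (k / 2) := by
    rw [← pow_add]
    congr 1
    obtain ⟨r, hr⟩ := hkeven
    omega
  by_cases hcase : δ * n ≤ 2 * a
  · -- trivial bound by 1
    have h1 : (μ {ω | δ ≤ |modML x₀ n₀ X n ω - μstar|}).toReal ≤ 1 := by
      rw [← ENNReal.toReal_one]
      exact ENNReal.toReal_mono ENNReal.one_ne_top prob_le_one
    refine le_trans h1 ?_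
    rw [le_div_iff₀ hden]
    have h2 : (n:ℝ) ^ (k / 2) ≤ (n:ℝ) ^ k :=
      pow_le_pow_right₀ hnR (Nat.div_le_self _ _)
    have h3 : (n:ℝ) ^ (k/2) * δ ^ k ≤ (n:ℝ) ^ k * δ ^ k :=
      mul_le_mul_of_nonneg_right h2 (by positivity)
    have h4 : (n:ℝ) ^ k * δ ^ k = ((n:ℝ) * δ) ^ k := (mul_pow _ _ _).symm
    have h5 : ((n:ℝ) * δ) ^ k ≤ (2 * a) ^ k := by
      refine pow_le_pow_left₀ (by positivity) ?_ k
      linarith [hcase, mul_comm δ (n:ℝ)]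
    have h6 : (0:ℝ) ≤ D * 2 ^ k := by positivity
    calc (1:ℝ) * ((n:ℝ) ^ (k/2) * δ ^ k) = (n:ℝ) ^ (k/2) * δ ^ k := one_mul _
      _ ≤ (2 * a) ^ k := by rw [← h4] at h5; linarith
      _ ≤ D * 2 ^ k + (2 * a) ^ k + 1 := by linarith
  · push_neg at hcase
    have hsub : {ω | δ ≤ |modML x₀ n₀ X n ω - μstar|}
        ⊆ {ω | (δ * n / 2) ^ k ≤ |S ω| ^ k} := by
      intro ω hω
      simp only [Set.mem_setOf_eq] at hω ⊢
      rw [hrw ω] at hω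
      have h1 : δ * ((n:ℝ) + n₀) ≤ |n₀ * (x₀ - μstar) + S ω| := by
        rw [abs_div, abs_of_pos hc, le_div_iff₀ hc] at hω
        linarith [hω]
      have h2 : |n₀ * (x₀ - μstar) + S ω| ≤ a + |S ω| := by
        calc |n₀ * (x₀ - μstar) + S ω| ≤ |n₀ * (x₀ - μstar)| + |S ω| := abs_add_le _ _
          _ = a + |S ω| := by rw [hadef]
      have h3 : δ * n / 2 ≤ |S ω| := by nlinarith [mul_pos hδ hc, hδ.le, hn₀.le]
      exact pow_le_pow_left₀ (by positivity) h3 k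
    have hmono : (μ {ω | δ ≤ |modML x₀ n₀ X n ω - μstar|}).toReal
        ≤ (μ {ω | (δ * n / 2) ^ k ≤ |S ω| ^ k}).toReal :=
      ENNReal.toReal_mono (measure_ne_top μ _) (measure_mono hsub)
    have hmarkov := mul_meas_ge_le_integral_of_nonneg
      (μ := μ) (f := fun ω => |S ω| ^ k)
      (Filter.Eventually.of_forall fun ω => by positivity) hSabs_int ((δ * n / 2) ^ k)
    have hεpos : (0:ℝ) < (δ * n / 2) ^ k := by positivity
    have hkey : (μ {ω | (δ * n / 2) ^ k ≤ |S ω| ^ k}).toReal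
        ≤ D * (n:ℝ) ^ (k/2) / (δ * n / 2) ^ k := by
      rw [le_div_iff₀ hεpos]
      calc (μ {ω | (δ * n / 2) ^ k ≤ |S ω| ^ k}).toReal * (δ * n / 2) ^ k
          = (δ * n / 2) ^ k * (μ {ω | (δ * n / 2) ^ k ≤ |S ω| ^ k}).toReal := mul_comm _ _
        _ ≤ ∫ ω, |S ω| ^ k ∂μ := hmarkov
        _ ≤ D * (n:ℝ) ^ (k/2) := hSmom
    refine le_trans (le_trans hmono hkey) ?_
    have heq2 : D * (n:ℝ) ^ (k/2) / (δ * n / 2) ^ k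
        = D * 2 ^ k / ((n:ℝ) ^ (k/2) * δ ^ k) := by
      rw [div_pow, mul_pow, hnk]
      have hnhalf : ((n:ℝ) ^ (k/2)) ≠ 0 := by positivity
      have hδk : δ ^ k ≠ 0 := by positivity
      have h2k : ((2:ℝ) ^ k) ≠ 0 := by positivity
      field_simp
    rw [heq2]
    gcongr
    linarith [pow_nonneg (by linarith : (0:ℝ) ≤ 2 * a) k]
end

section
/- Let X, X₁, X₂, … be i.i.d. real random variables with finite variance, let μ* = E[X], and define μ̂_n = (n₀·x₀ + ∑_{i=1}^n X_i)/(n + n₀) for fixed constants x₀ ∈ ℝ and n₀ > 0 (with μ̂_0 = x₀). Then ∑_{i=0}^{n−1} E[(μ̂_i − μ*)²] = var(X)·ln n + O(1); that is, there exists a constant C such that for all n ≥ 2, |∑_{i=0}^{n−1} E[(μ̂_i − μ*)²] − var(X)·ln n| ≤ C. -/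
open MeasureTheory ProbabilityTheory Finset

lemma myVarSubConst {Ω : Type*} [MeasurableSpace Ω] (μ : Measure Ω) [IsProbabilityMeasure μ]
    {X : Ω → ℝ} (hX : MemLp X 2 μ) (c : ℝ) :
    variance (fun ω => X ω - c) μ = variance X μ := by
  have h2 : MemLp (fun ω => X ω - c) 2 μ := hX.sub (memLp_const c)
  rw [variance_eq_integral h2.aemeasurable, variance_eq_integral hX.aemeasurable]
  have hm : (∫ ω, (X ω - c) ∂μ) = (∫ ω, X ω ∂μ) - c := by
    rw [integral_sub (hX.integrable one_le_two) (integrable_const c), integral_const,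
      probReal_univ, smul_eq_mul, one_mul]
  congr 1
  funext ω
  rw [show μ[fun ω => X ω - c] = (∫ ω, X ω ∂μ) - c from hm]
  ring

lemma mySumInvSq (n₀ : ℝ) (hn₀ : 0 < n₀) (n : ℕ) :
    ∑ i ∈ Finset.range n, 1 / ((i : ℝ) + n₀) ^ 2 ≤ 1 / n₀ ^ 2 + 1 / n₀ := by
  cases n with
  | zero => simp; positivity
  | succ m =>
    rw [Finset.sum_range_succ']
    have h0 : (1 : ℝ) / ((0 : ℕ) + n₀) ^ 2 = 1 / n₀ ^ 2 := by norm_num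
    rw [h0]
    have tele : ∑ i ∈ Finset.range m, (1 / ((i : ℝ) + n₀) - 1 / ((i + 1 : ℕ) + n₀))
        = 1 / ((0:ℕ) + n₀) - 1 / ((m : ℝ) + n₀) := by
      have := Finset.sum_range_sub' (f := fun i : ℕ => 1 / ((i : ℝ) + n₀)) m
      simpa using this
    have step1 : ∑ i ∈ Finset.range m, 1 / (((i + 1 : ℕ) : ℝ) + n₀) ^ 2
        ≤ ∑ i ∈ Finset.range m, (1 / ((i : ℝ) + n₀) - 1 / ((i + 1 : ℕ) + n₀)) := by
      refine Finset.sum_le_sum fun i _ => ?_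
      have hi : (0:ℝ) ≤ (i:ℝ) := Nat.cast_nonneg i
      have ha : (0:ℝ) < (i:ℝ) + n₀ := by linarith
      have hb : (0:ℝ) < ((i + 1 : ℕ) : ℝ) + n₀ := by push_cast; linarith
      have heq : 1 / ((i : ℝ) + n₀) - 1 / (((i + 1 : ℕ) : ℝ) + n₀)
          = 1 / (((i : ℝ) + n₀) * (((i + 1 : ℕ) : ℝ) + n₀)) := by
        rw [div_sub_div _ _ (ne_of_gt ha) (ne_of_gt hb)]
        push_cast
        rw [div_eq_div_iff (by positivity) (by positivity)]
        ring
      rw [heq]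
      apply one_div_le_one_div_of_le
      · positivity
      · push_cast; nlinarith
    rw [tele] at step1
    have hpos : 0 ≤ 1 / ((m : ℝ) + n₀) := by positivity
    have h00 : (1:ℝ) / ((0:ℕ) + n₀) = 1 / n₀ := by norm_num
    rw [h00] at step1
    linarith [step1]

lemma myHarmonicLog (n : ℕ) (hn : 1 ≤ n) :
    |∑ i ∈ Finset.range n, 1 / ((i : ℝ) + 1) - Real.log n| ≤ 1 := by
  have hH : ∑ i ∈ Finset.range n, 1 / ((i : ℝ) + 1) = (harmonic n : ℝ) := by
    rw [harmonic]
    push_cast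
    simp [one_div]
  rw [hH, abs_le]
  constructor
  · have h1 : Real.log n ≤ Real.log (n + 1) := by
      apply Real.log_le_log (by positivity)
      push_cast; linarith
    have h2 := log_add_one_le_harmonic n
    push_cast at h2
    linarith
  · have := harmonic_le_one_add_log n
    linarith

lemma myTermBound (n₀ V c : ℝ) (hn₀ : 0 < n₀) (hV : 0 ≤ V) (i : ℕ) :
    |(c ^ 2 + i * V) / ((i : ℝ) + n₀) ^ 2 - V / ((i : ℝ) + 1)|
      ≤ (c ^ 2 + V * (|1 - 2 * n₀| + n₀ ^ 2)) * (1 / ((i : ℝ) + n₀) ^ 2) := by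
  set a : ℝ := (i : ℝ) with ha'
  have ha : 0 ≤ a := Nat.cast_nonneg i
  have hd : (0:ℝ) < a + n₀ := by linarith
  have h1 : (0:ℝ) < a + 1 := by linarith
  have hnum : (c ^ 2 + a * V) / (a + n₀) ^ 2 - V / (a + 1)
      = (c ^ 2 * (a + 1) + V * (a * (1 - 2 * n₀) - n₀ ^ 2)) / ((a + n₀) ^ 2 * (a + 1)) := by
    field_simp
    ring
  rw [hnum, abs_div, abs_of_pos (show (0:ℝ) < (a + n₀) ^ 2 * (a + 1) by positivity)]
  have habs : |c ^ 2 * (a + 1) + V * (a * (1 - 2 * n₀) - n₀ ^ 2)|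
      ≤ (a + 1) * (c ^ 2 + V * (|1 - 2 * n₀| + n₀ ^ 2)) := by
    have h3 := le_abs_self (1 - 2 * n₀)
    have h4 := neg_abs_le (1 - 2 * n₀)
    rw [abs_le]
    constructor <;> nlinarith [sq_nonneg c, mul_nonneg hV ha, sq_nonneg n₀,
      mul_nonneg (mul_nonneg hV ha) (abs_nonneg (1 - 2*n₀)), abs_nonneg (1 - 2*n₀)]
  calc |c ^ 2 * (a + 1) + V * (a * (1 - 2 * n₀) - n₀ ^ 2)| / ((a + n₀) ^ 2 * (a + 1))
      ≤ ((a + 1) * (c ^ 2 + V * (|1 - 2 * n₀| + n₀ ^ 2))) / ((a + n₀) ^ 2 * (a + 1)) := by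
        gcongr
    _ = (c ^ 2 + V * (|1 - 2 * n₀| + n₀ ^ 2)) * (1 / (a + n₀) ^ 2) := by
        field_simp

lemma myKey {Ω : Type*} [MeasurableSpace Ω] (μ : Measure Ω) [IsProbabilityMeasure μ]
    (X : ℕ → Ω → ℝ)
    (hmeas : ∀ i, Measurable (X i))
    (hindep : iIndepFun X μ)
    (hident : ∀ i, IdentDistrib (X i) (X 0) μ μ)
    (hL2 : MemLp (X 0) 2 μ)
    (μstar : ℝ) (hμstar : μstar = ∫ ω, X 0 ω ∂μ)
    (x₀ n₀ : ℝ) (hn₀ : 0 < n₀) (i : ℕ) :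
    ∫ ω, (modML x₀ n₀ X i ω - μstar) ^ 2 ∂μ
      = ((n₀ * (x₀ - μstar)) ^ 2 + i * variance (X 0) μ) / ((i : ℝ) + n₀) ^ 2 := by
  set V := variance (X 0) μ with hVdef
  set c := n₀ * (x₀ - μstar) with hc
  set Y : ℕ → Ω → ℝ := fun j ω => X j ω - μstar with hYdef
  have hXj : ∀ j, MemLp (X j) 2 μ := fun j => (hident j).symm.memLp_snd hL2
  have hY2 : ∀ j, MemLp (Y j) 2 μ := fun j => (hXj j).sub (memLp_const μstar)
  have hYint : ∀ j, Integrable (Y j) μ := fun j => (hY2 j).integrable one_le_two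
  have hXint : ∀ j, Integrable (X j) μ := fun j => (hXj j).integrable one_le_two
  have hYmean : ∀ j, ∫ ω, Y j ω ∂μ = 0 := by
    intro j
    simp only [hYdef]
    rw [integral_sub (hXint j) (integrable_const _), (hident j).integral_eq, integral_const,
      probReal_univ, smul_eq_mul, one_mul, ← hμstar, sub_self]
  have hYvar : ∀ j, variance (Y j) μ = V := by
    intro j
    have hid : IdentDistrib (Y j) (fun ω => X 0 ω - μstar) μ μ :=
      (hident j).comp (measurable_id.sub measurable_const)
    rw [hid.variance_eq, myVarSubConst μ hL2 μstar]
  set Z : Ω → ℝ := fun ω => ∑ j ∈ Finset.range i, Y j ω with hZdef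
  have hZ2 : MemLp Z 2 μ := memLp_finset_sum (Finset.range i) (fun j _ => hY2 j)
  have hZint : Integrable Z μ := hZ2.integrable one_le_two
  have hZmean : ∫ ω, Z ω ∂μ = 0 := by
    simp only [hZdef]
    rw [integral_finset_sum _ fun j _ => hYint j]
    simp [hYmean]
  have hZvar : variance Z μ = i * V := by
    have hsum : Z = ∑ j ∈ Finset.range i, Y j := by
      funext ω; simp [hZdef, Finset.sum_apply]
    rw [hsum, IndepFun.variance_sum (fun j _ => hY2 j)
      (fun a _ b _ hab => (hindep.indepFun hab).comp
        (measurable_id.sub measurable_const) (measurable_id.sub measurable_const))]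
    simp [hYvar, Finset.sum_const, Finset.card_range, nsmul_eq_mul]
  have hZsq : ∫ ω, Z ω ^ 2 ∂μ = i * V := by
    have hv := variance_eq_sub hZ2
    simp only [Pi.pow_apply] at hv
    have : μ[Z] = 0 := hZmean
    rw [this] at hv
    nlinarith [hv, hZvar]
  have hd : (0:ℝ) < (i:ℝ) + n₀ := by positivity
  have hrep : (fun ω => (modML x₀ n₀ X i ω - μstar) ^ 2)
      = fun ω => (c + Z ω) ^ 2 / ((i:ℝ) + n₀) ^ 2 := by
    funext ω
    simp only [modML, hZdef, hc, hYdef]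
    rw [Finset.sum_sub_distrib, Finset.sum_const, Finset.card_range, ← div_pow]
    congr 1
    field_simp
    ring
  rw [hrep, integral_div]
  have hexp : ∫ ω, (c + Z ω) ^ 2 ∂μ = c ^ 2 + i * V := by
    have h1 : (fun ω => (c + Z ω) ^ 2) = fun ω => c ^ 2 + (2 * c * Z ω + Z ω ^ 2) :=
      funext fun ω => by ring
    have hIa : Integrable (fun ω => 2 * c * Z ω) μ := hZint.const_mul (2*c)
    have hIb : Integrable (fun ω => Z ω ^ 2) μ := hZ2.integrable_sq
    have hIab : Integrable (fun ω => 2 * c * Z ω + Z ω ^ 2) μ := hIa.add hIb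
    rw [h1, integral_add (integrable_const _) hIab,
      integral_add hIa hIb, integral_const_mul, hZmean, hZsq,
      integral_const, probReal_univ, smul_eq_mul, one_mul]
    ring
  rw [hexp]

/-- for i.i.d. `X, X₁, X₂, …` with finite variance and mean
`μ* = E[X]`, the accumulated squared deviations of the modified ML estimator satisfy
`∑_{i=0}^{n−1} E[(μ̂_i − μ*)²] = var(X)·ln n + O(1)`. -/
theorem modML_cumulative_sq_dev
    {Ω : Type*} [MeasurableSpace Ω] (μ : Measure Ω) [IsProbabilityMeasure μ]
    (X : ℕ → Ω → ℝ)
    (hmeas : ∀ i, Measurable (X i))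
    (hindep : iIndepFun X μ)
    (hident : ∀ i, IdentDistrib (X i) (X 0) μ μ)
    (hL2 : MemLp (X 0) 2 μ)
    (μstar : ℝ) (hμstar : μstar = ∫ ω, X 0 ω ∂μ)
    (x₀ n₀ : ℝ) (hn₀ : 0 < n₀) :
    ∃ C : ℝ, ∀ n : ℕ, 2 ≤ n →
      |(∑ i ∈ Finset.range n, ∫ ω, (modML x₀ n₀ X i ω - μstar) ^ 2 ∂μ)
          - variance (X 0) μ * Real.log n| ≤ C := by
  set V := variance (X 0) μ with hVdef
  set c := n₀ * (x₀ - μstar) with hc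
  set K := c ^ 2 + V * (|1 - 2 * n₀| + n₀ ^ 2) with hK
  have hV : 0 ≤ V := variance_nonneg _ μ
  have hK0 : 0 ≤ K := by positivity
  refine ⟨K * (1 / n₀ ^ 2 + 1 / n₀) + V, fun n hn => ?_⟩
  have hkey := myKey μ X hmeas hindep hident hL2 μstar hμstar x₀ n₀ hn₀
  have hsum : ∑ i ∈ Finset.range n, ∫ ω, (modML x₀ n₀ X i ω - μstar) ^ 2 ∂μ
      = ∑ i ∈ Finset.range n, (c ^ 2 + i * V) / ((i:ℝ) + n₀) ^ 2 :=
    Finset.sum_congr rfl fun i _ => hkey i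
  rw [hsum]
  have hdiv : ∑ i ∈ Finset.range n, V / ((i:ℝ) + 1)
      = V * ∑ i ∈ Finset.range n, 1 / ((i:ℝ) + 1) := by
    rw [Finset.mul_sum]
    exact Finset.sum_congr rfl fun i _ => by rw [mul_one_div]
  have hsplit : ∑ i ∈ Finset.range n, (c ^ 2 + i * V) / ((i:ℝ) + n₀) ^ 2 - V * Real.log n
      = (∑ i ∈ Finset.range n, ((c ^ 2 + i * V) / ((i:ℝ) + n₀) ^ 2 - V / ((i:ℝ) + 1)))
        + V * ((∑ i ∈ Finset.range n, 1 / ((i:ℝ) + 1)) - Real.log n) := by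
    rw [Finset.sum_sub_distrib, hdiv]
    ring
  rw [hsplit]
  have hA : |∑ i ∈ Finset.range n, ((c ^ 2 + i * V) / ((i:ℝ) + n₀) ^ 2 - V / ((i:ℝ) + 1))|
      ≤ K * (1 / n₀ ^ 2 + 1 / n₀) := by
    calc |∑ i ∈ Finset.range n, ((c ^ 2 + i * V) / ((i:ℝ) + n₀) ^ 2 - V / ((i:ℝ) + 1))|
        ≤ ∑ i ∈ Finset.range n, |(c ^ 2 + i * V) / ((i:ℝ) + n₀) ^ 2 - V / ((i:ℝ) + 1)| :=
          Finset.abs_sum_le_sum_abs _ _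
      _ ≤ ∑ i ∈ Finset.range n, K * (1 / ((i:ℝ) + n₀) ^ 2) :=
          Finset.sum_le_sum fun i _ => myTermBound n₀ V c hn₀ hV i
      _ = K * ∑ i ∈ Finset.range n, 1 / ((i:ℝ) + n₀) ^ 2 := (Finset.mul_sum _ _ _).symm
      _ ≤ K * (1 / n₀ ^ 2 + 1 / n₀) :=
          mul_le_mul_of_nonneg_left (mySumInvSq n₀ hn₀ n) hK0
  have hB : |V * ((∑ i ∈ Finset.range n, 1 / ((i:ℝ) + 1)) - Real.log n)| ≤ V := by
    rw [abs_mul, abs_of_nonneg hV]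
    calc V * |(∑ i ∈ Finset.range n, 1 / ((i:ℝ) + 1)) - Real.log n|
        ≤ V * 1 := mul_le_mul_of_nonneg_left (myHarmonicLog n (by omega)) hV
      _ = V := mul_one V
  calc |(∑ i ∈ Finset.range n, ((c ^ 2 + i * V) / ((i:ℝ) + n₀) ^ 2 - V / ((i:ℝ) + 1)))
        + V * ((∑ i ∈ Finset.range n, 1 / ((i:ℝ) + 1)) - Real.log n)|
      ≤ |∑ i ∈ Finset.range n, ((c ^ 2 + i * V) / ((i:ℝ) + n₀) ^ 2 - V / ((i:ℝ) + 1))|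
        + |V * ((∑ i ∈ Finset.range n, 1 / ((i:ℝ) + 1)) - Real.log n)| := abs_add_le _ _
    _ ≤ K * (1 / n₀ ^ 2 + 1 / n₀) + V := add_le_add hA hB
end

section
/- Let X, X₁, X₂, … be i.i.d. real random variables with E[|X|³] < ∞, let μ* = E[X], and define μ̂_n = (n₀·x₀ + ∑_{i=1}^n X_i)/(n + n₀) for fixed constants x₀ ∈ ℝ and n₀ > 0. Then the series ∑_{i=1}^∞ |E[(μ̂_i − μ*)³]| converges; in particular, for any constant c, the partial sums ∑_{i=1}^{n−1} c·E[(μ̂_i − μ*)³] remain bounded as n → ∞. -/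
open MeasureTheory ProbabilityTheory Finset
open scoped ENNReal

lemma aux_integrable_cube {Ω : Type*} [MeasurableSpace Ω] {μ : Measure Ω} {f : Ω → ℝ}
    (hf : MemLp f 3 μ) : Integrable (fun ω => f ω ^ 3) μ := by
  have h := hf.integrable_norm_rpow (by norm_num) (by norm_num)
  refine h.mono' (hf.aestronglyMeasurable.aemeasurable.pow_const 3).aestronglyMeasurable ?_
  filter_upwards with ω
  have h3 : ENNReal.toReal 3 = ((3 : ℕ) : ℝ) := by norm_num
  rw [h3, Real.rpow_natCast]
  simp [abs_pow]

lemma aux_memLp_three {Ω : Type*} [MeasurableSpace Ω] {μ : Measure Ω} {f : Ω → ℝ}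
    (hm : Measurable f) (hf : Integrable (fun ω => |f ω| ^ 3) μ) : MemLp f 3 μ := by
  rw [← memLp_norm_rpow_iff (q := 3) hm.aestronglyMeasurable (by norm_num) (by norm_num)]
  have h33 : (3 : ℝ≥0∞) / 3 = 1 := by
    rw [ENNReal.div_self] <;> norm_num
  rw [h33, memLp_one_iff_integrable]
  have h3 : ENNReal.toReal 3 = ((3 : ℕ) : ℝ) := by norm_num
  simp_rw [h3, Real.rpow_natCast, Real.norm_eq_abs]
  exact hf

lemma aux_third_moment {Ω : Type*} [MeasurableSpace Ω] (μ : Measure Ω) [IsProbabilityMeasure μ]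
    (Y : ℕ → Ω → ℝ) (hmeas : ∀ i, Measurable (Y i))
    (hindep : iIndepFun Y μ)
    (hmem : ∀ i, MemLp (Y i) 3 μ)
    (hEY : ∀ i, ∫ ω, Y i ω ∂μ = 0)
    (σ2 γ : ℝ)
    (hEY2 : ∀ i, ∫ ω, Y i ω ^ 2 ∂μ = σ2)
    (hEY3 : ∀ i, ∫ ω, Y i ω ^ 3 ∂μ = γ)
    (a : ℝ) (n : ℕ) :
    (∫ ω, (a + ∑ i ∈ Finset.range n, Y i ω) ∂μ = a) ∧
    (∫ ω, (a + ∑ i ∈ Finset.range n, Y i ω) ^ 3 ∂μ = a ^ 3 + n * (3 * a * σ2 + γ)) := by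
  have hYint : ∀ i, Integrable (Y i) μ := fun i => (hmem i).integrable (by norm_num)
  have hYint2 : ∀ i, Integrable (fun ω => Y i ω ^ 2) μ := fun i =>
    ((hmem i).mono_exponent (by norm_num)).integrable_sq
  have hYint3 : ∀ i, Integrable (fun ω => Y i ω ^ 3) μ := fun i => aux_integrable_cube (hmem i)
  have hTmem : ∀ n, MemLp (fun ω => a + ∑ i ∈ Finset.range n, Y i ω) 3 μ := by
    intro n
    have h := (memLp_const (μ := μ) (p := 3) a).add
      (memLp_finset_sum' (Finset.range n) (fun i _ => hmem i))
    have he : ((fun _ => a) + ∑ i ∈ Finset.range n, Y i) =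
        fun ω => a + ∑ i ∈ Finset.range n, Y i ω := by
      ext ω; simp
    rwa [he] at h
  have hTint : ∀ n, Integrable (fun ω => a + ∑ i ∈ Finset.range n, Y i ω) μ := fun n =>
    (hTmem n).integrable (by norm_num)
  have hTint2 : ∀ n, Integrable (fun ω => (a + ∑ i ∈ Finset.range n, Y i ω) ^ 2) μ := fun n =>
    ((hTmem n).mono_exponent (by norm_num)).integrable_sq
  have hTint3 : ∀ n, Integrable (fun ω => (a + ∑ i ∈ Finset.range n, Y i ω) ^ 3) μ := fun n =>
    aux_integrable_cube (hTmem n)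
  have hET : ∀ n, ∫ ω, (a + ∑ i ∈ Finset.range n, Y i ω) ∂μ = a := by
    intro n
    rw [integral_add (integrable_const a) (integrable_finset_sum _ fun i _ => hYint i),
      integral_finset_sum _ (fun i _ => hYint i)]
    simp [hEY]
  refine ⟨hET n, ?_⟩
  induction n with
  | zero => simp
  | succ n ih =>
    have hTY : IndepFun (fun ω => a + ∑ i ∈ Finset.range n, Y i ω) (Y n) μ := by
      have h1 := hindep.indepFun_sum_range_succ hmeas n
      have h2 : IndepFun (fun ω => ∑ i ∈ Finset.range n, Y i ω) (Y n) μ := by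
        have he : (∑ i ∈ Finset.range n, Y i) = fun ω => ∑ i ∈ Finset.range n, Y i ω := by
          ext ω; simp
        rwa [he] at h1
      exact h2.comp (measurable_const.add measurable_id) measurable_id
    have hTY2 : IndepFun (fun ω => (a + ∑ i ∈ Finset.range n, Y i ω) ^ 2) (Y n) μ :=
      hTY.comp (measurable_id.pow_const 2) measurable_id
    have hTYs : IndepFun (fun ω => a + ∑ i ∈ Finset.range n, Y i ω) (fun ω => Y n ω ^ 2) μ :=
      hTY.comp measurable_id (measurable_id.pow_const 2)
    have hI2 : Integrable (fun ω => (a + ∑ i ∈ Finset.range n, Y i ω) ^ 2 * Y n ω) μ := by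
      have := hTY2.integrable_mul (hTint2 n) (hYint n)
      exact this
    have hI3 : Integrable (fun ω => (a + ∑ i ∈ Finset.range n, Y i ω) * Y n ω ^ 2) μ := by
      have := hTYs.integrable_mul (hTint n) (hYint2 n)
      exact this
    have hexp : (fun ω => (a + ∑ i ∈ Finset.range (n + 1), Y i ω) ^ 3) =
        fun ω => (a + ∑ i ∈ Finset.range n, Y i ω) ^ 3
          + (3 * ((a + ∑ i ∈ Finset.range n, Y i ω) ^ 2 * Y n ω)
          + (3 * ((a + ∑ i ∈ Finset.range n, Y i ω) * Y n ω ^ 2) + Y n ω ^ 3)) := by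
      ext ω
      rw [Finset.sum_range_succ]
      ring
    have hI2' : Integrable (fun ω => 3 * ((a + ∑ i ∈ Finset.range n, Y i ω) ^ 2 * Y n ω)) μ :=
      hI2.const_mul 3
    have hI3' : Integrable (fun ω => 3 * ((a + ∑ i ∈ Finset.range n, Y i ω) * Y n ω ^ 2)) μ :=
      hI3.const_mul 3
    have hIb : Integrable (fun ω => 3 * ((a + ∑ i ∈ Finset.range n, Y i ω) * Y n ω ^ 2)
        + Y n ω ^ 3) μ := hI3'.add (hYint3 n)
    have hIa : Integrable (fun ω => 3 * ((a + ∑ i ∈ Finset.range n, Y i ω) ^ 2 * Y n ω)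
        + (3 * ((a + ∑ i ∈ Finset.range n, Y i ω) * Y n ω ^ 2) + Y n ω ^ 3)) μ := hI2'.add hIb
    rw [hexp, integral_add (hTint3 n) hIa, integral_add hI2' hIb, integral_add hI3' (hYint3 n),
      integral_const_mul, integral_const_mul]
    have e2 : ∫ ω, (a + ∑ i ∈ Finset.range n, Y i ω) ^ 2 * Y n ω ∂μ = 0 := by
      have h' : ∫ ω, (a + ∑ i ∈ Finset.range n, Y i ω) ^ 2 * Y n ω ∂μ
          = (∫ ω, (a + ∑ i ∈ Finset.range n, Y i ω) ^ 2 ∂μ) * ∫ ω, Y n ω ∂μ :=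
        hTY2.integral_fun_mul_eq_mul_integral (hTint2 n).aestronglyMeasurable (hYint n).aestronglyMeasurable
      rw [h', hEY n, mul_zero]
    have e3 : ∫ ω, (a + ∑ i ∈ Finset.range n, Y i ω) * Y n ω ^ 2 ∂μ = a * σ2 := by
      have h' : ∫ ω, (a + ∑ i ∈ Finset.range n, Y i ω) * Y n ω ^ 2 ∂μ
          = (∫ ω, (a + ∑ i ∈ Finset.range n, Y i ω) ∂μ) * ∫ ω, Y n ω ^ 2 ∂μ :=
        hTYs.integral_fun_mul_eq_mul_integral (hTint n).aestronglyMeasurable (hYint2 n).aestronglyMeasurable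
      rw [h', hET n, hEY2 n]
    rw [e2, e3, ih, hEY3 n]
    push_cast
    ring

/-- for i.i.d. `X, X₁, X₂, …` with `E[|X|³] < ∞` and mean
`μ* = E[X]`, the series `∑_{i=1}^∞ |E[(μ̂_i − μ*)³]|` converges; in particular,
for any constant `c` the partial sums `∑_{i=1}^{n−1} c·E[(μ̂_i − μ*)³]` remain
bounded as `n → ∞`. -/
theorem modML_third_order_summable
    {Ω : Type*} [MeasurableSpace Ω] (μ : Measure Ω) [IsProbabilityMeasure μ]
    (X : ℕ → Ω → ℝ)
    (hmeas : ∀ i, Measurable (X i))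
    (hindep : iIndepFun X μ)
    (hident : ∀ i, IdentDistrib (X i) (X 0) μ μ)
    (hmom : Integrable (fun ω => |X 0 ω| ^ 3) μ)
    (μstar : ℝ) (hμstar : μstar = ∫ ω, X 0 ω ∂μ)
    (x₀ n₀ : ℝ) (hn₀ : 0 < n₀) :
    (Summable fun i : ℕ => |∫ ω, (modML x₀ n₀ X (i + 1) ω - μstar) ^ 3 ∂μ|) ∧
      ∀ c : ℝ, ∃ B : ℝ, ∀ n : ℕ,
        |∑ i ∈ Finset.Ico 1 n, c * ∫ ω, (modML x₀ n₀ X i ω - μstar) ^ 3 ∂μ| ≤ B := by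
  classical
  set Y : ℕ → Ω → ℝ := fun i ω => X i ω - μstar with hYdef
  have hYmeas : ∀ i, Measurable (Y i) := fun i => (hmeas i).sub measurable_const
  have hYindep : iIndepFun Y μ :=
    hindep.comp (fun _ (x : ℝ) => x - μstar) (fun _ => measurable_id.sub measurable_const)
  have hX0mem : MemLp (X 0) 3 μ := aux_memLp_three (hmeas 0) hmom
  have hidY : ∀ i, IdentDistrib (Y i) (Y 0) μ μ := fun i =>
    (hident i).comp (measurable_id.sub measurable_const)
  have hYmem : ∀ i, MemLp (Y i) 3 μ := fun i =>
    (hidY i).memLp_iff.mpr (hX0mem.sub (memLp_const μstar))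
  have hEY : ∀ i, ∫ ω, Y i ω ∂μ = 0 := by
    intro i
    rw [(hidY i).integral_eq]
    have : ∫ ω, Y 0 ω ∂μ = (∫ ω, X 0 ω ∂μ) - μstar := by
      rw [hYdef]
      rw [integral_sub (hX0mem.integrable (by norm_num)) (integrable_const μstar)]
      simp
    rw [this, hμstar, sub_self]
  set σ2 := ∫ ω, Y 0 ω ^ 2 ∂μ with hσ2def
  set γ := ∫ ω, Y 0 ω ^ 3 ∂μ with hγdef
  have hEY2 : ∀ i, ∫ ω, Y i ω ^ 2 ∂μ = σ2 := fun i =>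
    ((hidY i).comp (measurable_id.pow_const 2)).integral_eq
  have hEY3 : ∀ i, ∫ ω, Y i ω ^ 3 ∂μ = γ := fun i =>
    ((hidY i).comp (measurable_id.pow_const 3)).integral_eq
  have hσ2 : 0 ≤ σ2 := integral_nonneg fun ω => sq_nonneg _
  set a := n₀ * (x₀ - μstar) with hadef
  have key := fun n => (aux_third_moment μ Y hYmeas hYindep hYmem hEY σ2 γ hEY2 hEY3 a n).2
  have hrepr : ∀ (n : ℕ) (ω : Ω), modML x₀ n₀ X n ω - μstar
      = (a + ∑ i ∈ Finset.range n, Y i ω) / ((n : ℝ) + n₀) := by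
    intro n ω
    have hpos : (0:ℝ) < (n : ℝ) + n₀ := by positivity
    rw [modML, eq_div_iff hpos.ne', sub_mul, div_mul_cancel₀ _ hpos.ne']
    simp only [hYdef, hadef]
    rw [Finset.sum_sub_distrib]
    simp [Finset.card_range]
    ring
  have hint3 : ∀ n : ℕ, ∫ ω, (modML x₀ n₀ X n ω - μstar) ^ 3 ∂μ
      = (a ^ 3 + n * (3 * a * σ2 + γ)) / ((n : ℝ) + n₀) ^ 3 := by
    intro n
    simp_rw [hrepr n, div_pow]
    rw [integral_div, key n]
  set C := |a| ^ 3 + 3 * |a| * σ2 + |γ| with hCdef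
  have hC : 0 ≤ C := by positivity
  have hbound : ∀ i : ℕ, |∫ ω, (modML x₀ n₀ X (i + 1) ω - μstar) ^ 3 ∂μ|
      ≤ C / ((i : ℝ) + 1) ^ 2 := by
    intro i
    rw [hint3 (i + 1)]
    set m : ℝ := (i : ℝ) + 1 with hmdef
    have hm1 : (1:ℝ) ≤ m := by simp [hmdef]
    have hmpos : (0:ℝ) < m := by linarith
    have hcast : ((i + 1 : ℕ) : ℝ) = m := by push_cast; rfl
    rw [hcast, abs_div, abs_of_pos (by positivity : (0:ℝ) < (m + n₀) ^ 3)]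
    have hnum : |a ^ 3 + m * (3 * a * σ2 + γ)| ≤ C * m := by
      have h1 : |3 * a * σ2 + γ| ≤ 3 * |a| * σ2 + |γ| := by
        refine (abs_add_le _ _).trans ?_
        have h0 : |3 * a * σ2| = 3 * |a| * σ2 := by
          rw [abs_mul, abs_mul, abs_of_nonneg hσ2, abs_of_nonneg (by norm_num : (0:ℝ) ≤ 3)]
        rw [h0]
      refine (abs_add_le _ _).trans ?_
      have h2 : |a ^ 3| = |a| ^ 3 := abs_pow a 3
      have h3 : |m * (3 * a * σ2 + γ)| = m * |3 * a * σ2 + γ| := by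
        rw [abs_mul, abs_of_pos hmpos]
      rw [h2, h3, hCdef]
      nlinarith [abs_nonneg a, abs_nonneg γ, pow_nonneg (abs_nonneg a) 3,
        mul_nonneg (mul_nonneg (by norm_num : (0:ℝ) ≤ 3) (abs_nonneg a)) hσ2]
    calc |a ^ 3 + m * (3 * a * σ2 + γ)| / (m + n₀) ^ 3 ≤ (C * m) / (m + n₀) ^ 3 := by
          gcongr
      _ ≤ (C * m) / m ^ 3 := by
          refine div_le_div_of_nonneg_left (by positivity) (by positivity) ?_
          have : m ≤ m + n₀ := by linarith
          exact pow_le_pow_left₀ (by positivity) this 3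
      _ = C / m ^ 2 := by
          field_simp
  have hsum2 : Summable (fun i : ℕ => C / ((i : ℝ) + 1) ^ 2) := by
    have h1 : Summable (fun n : ℕ => 1 / ((n : ℝ)) ^ 2) := Real.summable_one_div_nat_pow.mpr one_lt_two
    have h2 : Summable (fun i : ℕ => 1 / (((i + 1 : ℕ)) : ℝ) ^ 2) :=
      (summable_nat_add_iff (f := fun n : ℕ => 1 / ((n : ℝ)) ^ 2) 1).mpr h1
    have h3 : Summable (fun i : ℕ => C * (1 / ((i : ℝ) + 1) ^ 2)) := by
      refine (h2.mul_left C).congr fun i => ?_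
      push_cast
      ring
    refine h3.congr fun i => ?_
    ring
  have hS : Summable fun i : ℕ => |∫ ω, (modML x₀ n₀ X (i + 1) ω - μstar) ^ 3 ∂μ| :=
    Summable.of_nonneg_of_le (fun i => abs_nonneg _) hbound hsum2
  refine ⟨hS, fun c => ⟨|c| * ∑' i, |∫ ω, (modML x₀ n₀ X (i + 1) ω - μstar) ^ 3 ∂μ|, fun n => ?_⟩⟩
  calc |∑ i ∈ Finset.Ico 1 n, c * ∫ ω, (modML x₀ n₀ X i ω - μstar) ^ 3 ∂μ|
      ≤ ∑ i ∈ Finset.Ico 1 n, |c * ∫ ω, (modML x₀ n₀ X i ω - μstar) ^ 3 ∂μ| :=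
        Finset.abs_sum_le_sum_abs _ _
    _ = |c| * ∑ i ∈ Finset.Ico 1 n, |∫ ω, (modML x₀ n₀ X i ω - μstar) ^ 3 ∂μ| := by
        rw [Finset.mul_sum]
        exact Finset.sum_congr rfl fun i _ => abs_mul _ _
    _ ≤ |c| * ∑' i, |∫ ω, (modML x₀ n₀ X (i + 1) ω - μstar) ^ 3 ∂μ| := by
        refine mul_le_mul_of_nonneg_left ?_ (abs_nonneg c)
        have he : ∑ i ∈ Finset.Ico 1 n, |∫ ω, (modML x₀ n₀ X i ω - μstar) ^ 3 ∂μ|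
            = ∑ j ∈ Finset.range (n - 1), |∫ ω, (modML x₀ n₀ X (j + 1) ω - μstar) ^ 3 ∂μ| := by
          rw [Finset.sum_Ico_eq_sum_range]
          exact Finset.sum_congr rfl fun j _ => by rw [add_comm]
        rw [he]
        exact Summable.sum_le_tsum _ (fun i _ => abs_nonneg _) hS
end
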